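/- Let G be a 3-connected signed graph with adjacent edges e₁ = uv₁ and e₂ = uv₂ sharing a common vertex u. If G - u is unbalanced, then e₁ and e₂ are untied: there exist cycles of both signs containing both e₁ and e₂. -/

import Mathlib

/-- A finite loopless signed multigraph. -/
structure SGraph : Type 1 where
  V : Type
  E : Type
  [fintV : Fintype V]
  [decV : DecidableEq V]
  [fintE : Fintype E]
  [decE : DecidableEq E]
  ends : E → Sym2 V
  loopless : ∀ e, ¬ (ends e).IsDiag
  sgn : E → ℤˣ

attribute [instance] SGraph.fintV SGraph.decV SGraph.fintE SGraph.decE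

namespace SGraph

variable (G : SGraph)

/-- Degree of a vertex in an edge set. -/
noncomputable def deg (S : Set G.E) (v : G.V) : ℕ := {e ∈ S | v ∈ G.ends e}.ncard

/-- The sign of an edge set: the product of the signs of its edges. -/
noncomputable def signOf (S : Set G.E) : ℤˣ := ∏ᶠ e ∈ S, G.sgn e

/-- An edge set is connected: any two of its edges are linked by a chain of
edges of the set, consecutive ones sharing a vertex. -/
def conn (S : Set G.E) : Prop :=
  ∀ e ∈ S, ∀ f ∈ S,
    Relation.ReflTransGen (fun a b => a ∈ S ∧ b ∈ S ∧ ∃ v, v ∈ G.ends a ∧ v ∈ G.ends b) e f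

/-- An edge set is (the edge set of) a cycle: nonempty, every vertex has degree 0 or 2,
and it is connected. -/
def IsCycle (S : Set G.E) : Prop :=
  S.Nonempty ∧ (∀ v, G.deg S v = 0 ∨ G.deg S v = 2) ∧ G.conn S

/-- The vertices covered by an edge set. -/
def verts (S : Set G.E) : Set G.V := {v | ∃ e ∈ S, v ∈ G.ends e}

/-- Two edges are untied: there are cycles of both signs through both edges. -/
def Untied (e₁ e₂ : G.E) : Prop :=
  (∃ C, G.IsCycle C ∧ e₁ ∈ C ∧ e₂ ∈ C ∧ G.signOf C = 1) ∧
  (∃ C, G.IsCycle C ∧ e₁ ∈ C ∧ e₂ ∈ C ∧ G.signOf C = -1)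

/-- Two edges are tied: all cycles through both have the same sign. -/
def Tied (e₁ e₂ : G.E) : Prop :=
  ∀ C C', G.IsCycle C → G.IsCycle C' → e₁ ∈ C → e₂ ∈ C → e₁ ∈ C' → e₂ ∈ C' →
    G.signOf C = G.signOf C'

/-- A signed graph is balanced if every cycle is positive. -/
def Balanced : Prop := ∀ C, G.IsCycle C → G.signOf C = 1

/-- Reachability between vertices avoiding a forbidden vertex set `S`. -/
def ReachOutside (S : Set G.V) : G.V → G.V → Prop :=
  Relation.ReflTransGen (fun a b => a ∉ S ∧ b ∉ S ∧ ∃ e, G.ends e = s(a, b))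

/-- The graph minus the vertex set `S` is connected. -/
def ConnOutside (S : Set G.V) : Prop :=
  ∀ u v : G.V, u ∉ S → v ∉ S → G.ReachOutside S u v

/-- `k`-connectivity: more than `k` vertices, and removing fewer than `k` vertices
leaves a connected graph. -/
def KConnected (k : ℕ) : Prop :=
  k + 1 ≤ Fintype.card G.V ∧ ∀ S : Set G.V, S.ncard < k → G.ConnOutside S

/-- `P` is the edge set of a path from `a` to `b` (possibly trivial when `a = b`). -/
def IsPath (P : Set G.E) (a b : G.V) : Prop :=
  (a = b ∧ P = ∅) ∨
  (a ≠ b ∧ P.Nonempty ∧ G.deg P a = 1 ∧ G.deg P b = 1 ∧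
    (∀ v, v ≠ a → v ≠ b → G.deg P v = 0 ∨ G.deg P v = 2) ∧ G.conn P)

/-- The vertices of a path from `a` to `b`, including its ends. -/
def pverts (P : Set G.E) (a b : G.V) : Set G.V := G.verts P ∪ {a, b}

/-- An edge set is an edge-cut `δ(X)`. -/
def EdgeCut (S : Set G.E) : Prop :=
  ∃ X : Set G.V, ∀ e, e ∈ S ↔ ∃ a b, G.ends e = s(a, b) ∧ a ∈ X ∧ b ∉ X

/-- A signed graph is simple if no two distinct edges are parallel. -/
def Simple : Prop := ∀ e f : G.E, G.ends e = G.ends f → e = f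

end SGraph

namespace SGraph

variable {G : SGraph}

inductive Walk (G : SGraph) : G.V → G.V → Type
  | nil {a : G.V} : Walk G a a
  | cons {a b c : G.V} (e : G.E) (he : G.ends e = s(a, b)) (w : Walk G b c) : Walk G a c

namespace Walk

@[simp] def support {a b : G.V} : Walk G a b → List G.V
  | .nil => [a]
  | .cons _ _ w => a :: w.support

@[simp] def edges {a b : G.V} : Walk G a b → List G.E
  | .nil => []
  | .cons e _ w => e :: w.edges

def length {a b : G.V} (w : Walk G a b) : ℕ := w.edges.length

@[simp] lemma length_nil {a : G.V} : (Walk.nil : Walk G a a).length = 0 := rfl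
@[simp] lemma length_cons {a b c : G.V} (e : G.E) (he : G.ends e = s(a, b)) (w : Walk G b c) :
    (Walk.cons e he w).length = w.length + 1 := rfl

@[simp] def append {a b c : G.V} : Walk G a b → Walk G b c → Walk G a c
  | .nil, w => w
  | .cons e he w, w' => .cons e he (w.append w')

def reverse {a b : G.V} : Walk G a b → Walk G b a
  | .nil => .nil
  | .cons e he w => w.reverse.append (.cons e (he.trans (Sym2.eq_swap)) .nil)

@[simp] lemma support_ne_nil {a b : G.V} (w : Walk G a b) : w.support ≠ [] := by
  cases w <;> simp

@[simp] lemma start_mem_support {a b : G.V} (w : Walk G a b) : a ∈ w.support := by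
  cases w <;> simp

@[simp] lemma end_mem_support {a b : G.V} (w : Walk G a b) : b ∈ w.support := by
  induction w with
  | nil => simp
  | cons e he w ih => simp [ih]

@[simp] lemma support_append {a b c : G.V} (w : Walk G a b) (w' : Walk G b c) :
    (w.append w').support = w.support ++ w'.support.tail := by
  induction w with
  | nil => cases w' <;> simp
  | cons e he w ih => simp [ih]

@[simp] lemma edges_append {a b c : G.V} (w : Walk G a b) (w' : Walk G b c) :
    (w.append w').edges = w.edges ++ w'.edges := by
  induction w with
  | nil => simp
  | cons e he w ih => simp [ih]

lemma mem_support_append_iff {a b c : G.V} (w : Walk G a b) (w' : Walk G b c) (v : G.V) :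
    v ∈ (w.append w').support ↔ v ∈ w.support ∨ v ∈ w'.support := by
  rw [support_append, List.mem_append]
  constructor
  · rintro (h | h)
    · exact Or.inl h
    · exact Or.inr (List.mem_of_mem_tail h)
  · rintro (h | h)
    · exact Or.inl h
    · cases w' with
    | nil => simp at h; subst h; exact Or.inl (by simp)
    | cons e he w₂ =>
        simp only [support, List.mem_cons] at h
        rcases h with rfl | h
        · exact Or.inl (by simp)
        · exact Or.inr (by simp [h])

@[simp] lemma support_reverse {a b : G.V} (w : Walk G a b) :
    w.reverse.support = w.support.reverse := by
  induction w with
  | nil => simp [reverse]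
  | cons e he w ih => simp [reverse, ih]

@[simp] lemma edges_reverse {a b : G.V} (w : Walk G a b) :
    w.reverse.edges = w.edges.reverse := by
  induction w with
  | nil => simp [reverse]
  | cons e he w ih => simp [reverse, ih]

/-- Both endpoints of an edge of a walk are in its support. -/
lemma mem_support_of_mem_edges {a b : G.V} (w : Walk G a b) {e : G.E} {v : G.V}
    (he : e ∈ w.edges) (hv : v ∈ G.ends e) : v ∈ w.support := by
  induction w with
  | nil => simp at he
  | cons f hf w ih =>
    simp only [edges, List.mem_cons] at he
    rcases he with rfl | he
    · rw [hf] at hv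
      rcases Sym2.mem_iff.mp hv with rfl | rfl
      · simp
      · simp [ih]  -- v = second vertex, which is start of w
    · simp [ih he]

/-- Every vertex of a nonempty walk is an endpoint of some edge of the walk. -/
lemma exists_edge_of_mem_support {a b : G.V} (w : Walk G a b) (hw : w.edges ≠ [])
    {v : G.V} (hv : v ∈ w.support) : ∃ e ∈ w.edges, v ∈ G.ends e := by
  induction w with
  | nil => simp at hw
  | cons f hf w ih =>
    simp only [support, List.mem_cons] at hv
    rcases hv with rfl | hv
    · exact ⟨f, by simp, by rw [hf]; simp⟩
    · cases w with
      | nil =>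
        simp at hv; subst hv
        exact ⟨f, by simp, by rw [hf]; simp⟩
      | cons g hg w₂ =>
        obtain ⟨e, he, hve⟩ := ih (by simp) hv
        exact ⟨e, List.mem_cons_of_mem _ he, hve⟩

end Walk

end SGraph

namespace SGraph

variable {G : SGraph}

namespace Walk

lemma ends_ne {e : G.E} {a b : G.V} (he : G.ends e = s(a, b)) : a ≠ b := by
  intro h
  exact G.loopless e (by rw [he, h]; exact Sym2.isDiag_iff_proj_eq.mpr rfl)

lemma two_mul_count_support {a b : G.V} (w : Walk G a b) (v : G.V) :
    2 * w.support.count v =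
      w.edges.countP (fun e => decide (v ∈ G.ends e)) +
        (if v = a then 1 else 0) + (if v = b then 1 else 0) := by
  induction w with
  | nil =>
    simp only [support, edges, List.countP_nil, List.count_singleton']
    split_ifs <;> simp_all
  | @cons a b' c e he w ih =>
    have hab : a ≠ b' := ends_ne he
    have hmem : (v ∈ G.ends e) ↔ (v = a ∨ v = b') := by rw [he]; simp
    simp only [support, edges, List.count_cons, List.countP_cons, beq_iff_eq,
      decide_eq_true_eq]
    have h1 : (if v ∈ G.ends e then 1 else 0) =
        (if v = a then 1 else 0) + (if v = b' then 1 else 0) := by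
      split_ifs <;> simp_all [hmem]
    have h2 : (if a = v then 1 else 0) = (if v = a then 1 else 0) := by
      split_ifs with hx hy hz
      · rfl
      · exact absurd hx.symm hy
      · exact absurd hz.symm hx
      · rfl
    omega

/-- The edge set of a walk. -/
def eset {a b : G.V} (w : Walk G a b) : Set G.E := {e | e ∈ w.edges}

@[simp] lemma mem_eset {a b : G.V} (w : Walk G a b) (e : G.E) :
    e ∈ w.eset ↔ e ∈ w.edges := Iff.rfl

lemma deg_eset {a b : G.V} (w : Walk G a b) (hed : w.edges.Nodup) (v : G.V) :
    G.deg w.eset v = w.edges.countP (fun e => decide (v ∈ G.ends e)) := by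
  have h : {e ∈ w.eset | v ∈ G.ends e} =
      ↑(w.edges.filter (fun e => decide (v ∈ G.ends e))).toFinset := by
    ext e; simp [eset, List.mem_filter]
  rw [deg, h, Set.ncard_coe_finset, List.toFinset_card_of_nodup (hed.filter _),
    List.countP_eq_length_filter]

lemma signOf_eset {a b : G.V} (w : Walk G a b) (hed : w.edges.Nodup) :
    G.signOf w.eset = (w.edges.map G.sgn).prod := by
  have h : w.eset = ↑w.edges.toFinset := by ext e; simp [eset]
  rw [signOf, h, finprod_mem_coe_finset, List.prod_toFinset _ hed]

lemma chain_from_first {S : Set G.E} {a b c : G.V} (e₀ : G.E) (he₀ : G.ends e₀ = s(a, b))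
    (w : Walk G b c) (hS : ∀ f ∈ (Walk.cons e₀ he₀ w).edges, f ∈ S) :
    ∀ f ∈ (Walk.cons e₀ he₀ w).edges,
      Relation.ReflTransGen
        (fun x y => x ∈ S ∧ y ∈ S ∧ ∃ v, v ∈ G.ends x ∧ v ∈ G.ends y) e₀ f := by
  induction w generalizing a e₀ with
  | nil =>
    intro f hf
    simp only [edges, List.mem_cons, List.not_mem_nil, or_false] at hf
    subst hf; exact Relation.ReflTransGen.refl
  | @cons b b₂ c e₁ he₁ w ih =>
    intro f hf
    simp only [edges, List.mem_cons] at hf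
    rcases hf with rfl | hf
    · exact Relation.ReflTransGen.refl
    · have hstep : (fun x y => x ∈ S ∧ y ∈ S ∧ ∃ v, v ∈ G.ends x ∧ v ∈ G.ends y) e₀ e₁ :=
        ⟨hS e₀ (by simp), hS e₁ (by simp),
          b, by rw [he₀]; simp, by rw [he₁]; simp⟩
      exact Relation.ReflTransGen.head hstep
        (ih e₁ he₁ (fun g hg => hS g (by simp only [edges, List.mem_cons] at hg ⊢; tauto))
          f (by simpa using hf))

lemma conn_eset {a b : G.V} (w : Walk G a b) : G.conn w.eset := by
  intro e he f hf
  cases w with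
  | nil => simp [eset] at he
  | @cons a b' c e₀ he₀ w =>
    have h1 := chain_from_first e₀ he₀ w (fun g hg => hg) e (by simpa using he)
    have h2 := chain_from_first e₀ he₀ w (fun g hg => hg) f (by simpa using hf)
    have hsymm : Symmetric (fun x y => x ∈ (Walk.cons e₀ he₀ w).eset ∧
        y ∈ (Walk.cons e₀ he₀ w).eset ∧ ∃ v, v ∈ G.ends x ∧ v ∈ G.ends y) := by
      rintro x y ⟨hx, hy, v, hvx, hvy⟩; exact ⟨hy, hx, v, hvy, hvx⟩
    exact Relation.ReflTransGen.trans ((@Relation.ReflTransGen.symmetric _ _ ⟨hsymm⟩).symm _ _ h1) h2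

lemma count_support_closed {a : G.V} (w : Walk G a a) (hne : w.edges ≠ [])
    (hsup : w.support.tail.Nodup) {v : G.V} :
    (v ∈ w.support → w.support.count v = if v = a then 2 else 1) := by
  intro hv
  cases w with
  | nil => simp at hne
  | @cons a b' c e₀ he₀ w' =>
    simp only [support, List.tail_cons] at hsup
    have ha_tail : a ∈ w'.support := end_mem_support w'
    rcases eq_or_ne v a with rfl | hva
    · simp [List.count_cons, List.count_eq_one_of_mem hsup ha_tail]
    · have hvtail : v ∈ w'.support := by
        simp only [support, List.mem_cons] at hv
        tauto
      simp [List.count_cons, List.count_eq_one_of_mem hsup hvtail, hva, Ne.symm hva]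

/-- A closed walk whose support-tail has no duplicates and whose edges have no
duplicates is a cycle. -/
lemma isCycle_eset {a : G.V} (w : Walk G a a) (hne : w.edges ≠ [])
    (hsup : w.support.tail.Nodup) (hed : w.edges.Nodup) : G.IsCycle w.eset := by
  refine ⟨?_, ?_, conn_eset w⟩
  · obtain ⟨e, he⟩ := List.exists_mem_of_ne_nil _ hne
    exact ⟨e, he⟩
  · intro v
    have key := two_mul_count_support w v
    rw [← deg_eset w hed v] at key
    by_cases hv : v ∈ w.support
    · right
      rw [count_support_closed w hne hsup hv] at key
      rcases eq_or_ne v a with rfl | hva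
      · simp at key; omega
      · simp [hva] at key; omega
    · left
      rw [List.count_eq_zero_of_not_mem hv] at key
      have hva : v ≠ a := fun h => hv (h ▸ start_mem_support w)
      simp only [if_neg hva] at key
      omega

end Walk

end SGraph

namespace SGraph

variable {G : SGraph}

namespace Walk

lemma support_head {a b : G.V} (w : Walk G a b) : w.support = a :: w.support.tail := by
  cases w <;> simp

lemma end_mem_tail {a b : G.V} (w : Walk G a b) (h : w.edges ≠ []) :
    b ∈ w.support.tail := by
  cases w with
  | nil => simp at h
  | cons e he w' => simpa using end_mem_support w'

/-- A walk whose support has no duplicates has no duplicate edges. -/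
lemma edges_nodup_of_support_nodup {a b : G.V} (w : Walk G a b)
    (h : w.support.Nodup) : w.edges.Nodup := by
  induction w with
  | nil => simp
  | @cons a b' c e he w ih =>
    simp only [support, List.nodup_cons] at h
    refine List.nodup_cons.mpr ⟨fun hmem => ?_, ih h.2⟩
    exact h.1 (mem_support_of_mem_edges w hmem (by rw [he]; simp))

def takeUntil {a b : G.V} : ∀ (w : Walk G a b) (v : G.V), v ∈ w.support → Walk G a v
  | .nil, v, h => by rw [show v = a by simpa using h]; exact .nil
  | .cons e he w, v, h =>
    if hx : a = v then by rw [← hx]; exact .nil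
    else .cons e he (w.takeUntil v (by
      simp only [support, List.mem_cons] at h
      exact h.resolve_left (fun hh => hx hh.symm)))

def dropUntil {a b : G.V} : ∀ (w : Walk G a b) (v : G.V), v ∈ w.support → Walk G v b
  | .nil, v, h => by rw [show v = a by simpa using h]; exact .nil
  | .cons e he w, v, h =>
    if hx : a = v then by rw [← hx]; exact .cons e he w
    else w.dropUntil v (by
      simp only [support, List.mem_cons] at h
      exact h.resolve_left (fun hh => hx hh.symm))

theorem take_spec {a b v : G.V} (w : Walk G a b) (h : v ∈ w.support) :
    (w.takeUntil v h).append (w.dropUntil v h) = w := by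
  induction w with
  | nil =>
    simp only [support, List.mem_singleton] at h
    subst h
    rfl
  | @cons a b' c e he w ih =>
    by_cases hx : a = v
    · subst hx
      simp [takeUntil, dropUntil]
    · simp only [takeUntil, dropUntil, dif_neg hx, append]
      rw [ih]

theorem support_take_drop {a b v : G.V} (w : Walk G a b) (h : v ∈ w.support) :
    w.support = (w.takeUntil v h).support ++ (w.dropUntil v h).support.tail := by
  conv_lhs => rw [← take_spec w h]
  rw [support_append]

theorem edges_take_drop {a b v : G.V} (w : Walk G a b) (h : v ∈ w.support) :
    w.edges = (w.takeUntil v h).edges ++ (w.dropUntil v h).edges := by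
  conv_lhs => rw [← take_spec w h]
  rw [edges_append]

theorem support_takeUntil_subset {a b v : G.V} (w : Walk G a b) (h : v ∈ w.support) :
    (w.takeUntil v h).support ⊆ w.support := by
  rw [support_take_drop w h]; exact List.subset_append_left _ _

theorem support_dropUntil_subset {a b v : G.V} (w : Walk G a b) (h : v ∈ w.support) :
    (w.dropUntil v h).support ⊆ w.support := by
  intro x hx
  rw [← take_spec w h, mem_support_append_iff]
  exact Or.inr hx

theorem edges_takeUntil_subset {a b v : G.V} (w : Walk G a b) (h : v ∈ w.support) :
    (w.takeUntil v h).edges ⊆ w.edges := by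
  rw [edges_take_drop w h]; exact List.subset_append_left _ _

theorem edges_dropUntil_subset {a b v : G.V} (w : Walk G a b) (h : v ∈ w.support) :
    (w.dropUntil v h).edges ⊆ w.edges := by
  rw [edges_take_drop w h]; exact List.subset_append_right _ _

/-- Rotate a closed walk to start at a given vertex of its support. -/
def rotate {a v : G.V} (c : Walk G a a) (h : v ∈ c.support) : Walk G v v :=
  (c.dropUntil v h).append (c.takeUntil v h)

lemma tail_support_append {a b c : G.V} (w : Walk G a b) (w' : Walk G b c) :
    (w.append w').support.tail = w.support.tail ++ w'.support.tail := by
  rw [support_append, support_head w]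
  simp

theorem support_rotate {a v : G.V} (c : Walk G a a) (h : v ∈ c.support) :
    (c.rotate h).support.tail ~r c.support.tail := by
  simp only [rotate, tail_support_append]
  refine List.IsRotated.trans List.isRotated_append ?_
  rw [← tail_support_append, take_spec]

theorem rotate_edges {a v : G.V} (c : Walk G a a) (h : v ∈ c.support) :
    (c.rotate h).edges ~r c.edges := by
  simp only [rotate, edges_append]
  refine List.IsRotated.trans List.isRotated_append ?_
  rw [← edges_append, take_spec]

/-- First vertex on a walk satisfying a predicate. -/
lemma exists_takeUntilP {a b : G.V} (w : Walk G a b) (p : G.V → Prop)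
    (h : ∃ v ∈ w.support, p v) :
    ∃ (c : G.V) (w' : Walk G a c), p c ∧ (∀ x ∈ w'.support, p x → x = c) ∧
      w'.support <+: w.support ∧ w'.edges <+: w.edges := by
  induction w with
  | nil =>
    obtain ⟨v, hv, hpv⟩ := h
    simp only [support, List.mem_singleton] at hv
    subst hv
    exact ⟨_, .nil, hpv, by simp +contextual, ⟨[], by simp⟩, ⟨[], by simp⟩⟩
  | @cons a b' c e he w ih =>
    by_cases hpa : p a
    · exact ⟨a, .nil, hpa, by simp +contextual,
        ⟨(Walk.cons e he w).support.tail, by simp [(support_head (Walk.cons e he w)).symm]⟩,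
        ⟨(Walk.cons e he w).edges, by simp⟩⟩
    · obtain ⟨v, hv, hpv⟩ := h
      have hv' : v ∈ w.support := by
        simp only [support, List.mem_cons] at hv
        rcases hv with rfl | hv
        · exact absurd hpv hpa
        · exact hv
      obtain ⟨c', w', hpc, hfirst, hsup, hed⟩ := ih ⟨v, hv', hpv⟩
      refine ⟨c', .cons e he w', hpc, ?_, ?_, ?_⟩
      · intro x hx hpx
        simp only [support, List.mem_cons] at hx
        rcases hx with rfl | hx
        · exact absurd hpx hpa
        · exact hfirst x hx hpx
      · obtain ⟨t, ht⟩ := hsup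
        exact ⟨t, by simp [ht]⟩
      · obtain ⟨t, ht⟩ := hed
        exact ⟨t, by simp [ht]⟩

def bypass {a b : G.V} : Walk G a b → Walk G a b
  | .nil => .nil
  | .cons e he w =>
    let w' := w.bypass
    if h : a ∈ w'.support then w'.dropUntil a h else .cons e he w'

lemma nodup_dropUntil {a b v : G.V} (w : Walk G a b) (h : v ∈ w.support)
    (hn : w.support.Nodup) : (w.dropUntil v h).support.Nodup := by
  have hsplit := support_take_drop w h
  rw [hsplit] at hn
  rw [support_head (w.dropUntil v h)]
  refine List.nodup_cons.mpr ⟨fun hmem => ?_, (List.nodup_append'.mp hn).2.1⟩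
  have hvtake : v ∈ (w.takeUntil v h).support := end_mem_support _
  exact (List.nodup_append'.mp hn).2.2 hvtake hmem

lemma support_bypass_subset {a b : G.V} (w : Walk G a b) :
    w.bypass.support ⊆ w.support := by
  induction w with
  | nil => simp [bypass]
  | @cons a b' c e he w ih =>
    simp only [bypass]
    split_ifs with h
    · refine List.Subset.trans (support_dropUntil_subset _ h) ?_
      intro x hx
      simp only [support, List.mem_cons]
      exact Or.inr (ih hx)
    · intro x hx
      simp only [support, List.mem_cons] at hx ⊢
      rcases hx with rfl | hx
      · exact Or.inl rfl
      · exact Or.inr (ih hx)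

lemma edges_bypass_subset {a b : G.V} (w : Walk G a b) :
    w.bypass.edges ⊆ w.edges := by
  induction w with
  | nil => simp [bypass]
  | @cons a b' c e he w ih =>
    simp only [bypass]
    split_ifs with h
    · refine List.Subset.trans (edges_dropUntil_subset _ h) ?_
      intro x hx
      simp only [edges, List.mem_cons]
      exact Or.inr (ih hx)
    · intro x hx
      simp only [edges, List.mem_cons] at hx ⊢
      rcases hx with rfl | hx
      · exact Or.inl rfl
      · exact Or.inr (ih hx)

lemma bypass_support_nodup {a b : G.V} (w : Walk G a b) : w.bypass.support.Nodup := by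
  induction w with
  | nil => simp [bypass]
  | @cons a b' c e he w ih =>
    simp only [bypass]
    split_ifs with h
    · exact nodup_dropUntil _ h ih
    · simp only [support, List.nodup_cons]
      exact ⟨h, ih⟩

/-- Reachability avoiding `S` yields a walk avoiding `S`. -/
lemma reach_to_walk {S : Set G.V} {a b : G.V} (h : G.ReachOutside S a b) (ha : a ∉ S) :
    ∃ w : Walk G a b, ∀ v ∈ w.support, v ∉ S := by
  induction h with
  | refl => exact ⟨.nil, by simpa using ha⟩
  | @tail c d hac hcd ih =>
    obtain ⟨w, hw⟩ := ih
    obtain ⟨-, hd, e, he⟩ := hcd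
    refine ⟨w.append (.cons e he .nil), fun v hv => ?_⟩
    rw [mem_support_append_iff] at hv
    rcases hv with hv | hv
    · exact hw v hv
    · simp only [support, List.mem_cons] at hv
      rcases hv with rfl | hv
      · exact hw v (end_mem_support w)
      · simp at hv
        subst hv
        exact hd

end Walk

end SGraph

namespace SGraph

variable {G : SGraph}

lemma ends_rep (e : G.E) : ∃ a b, G.ends e = s(a, b) := by
  obtain ⟨⟨a, b⟩, h⟩ := Quot.exists_rep (G.ends e)
  exact ⟨a, b, h.symm⟩

lemma deg_eq_two {S : Set G.E} (hS : G.IsCycle S) {v : G.V} {e : G.E}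
    (he : e ∈ S) (hv : v ∈ G.ends e) : G.deg S v = 2 := by
  rcases hS.2.1 v with h | h
  · exfalso
    rw [deg, Set.ncard_eq_zero (Set.toFinite _)] at h
    exact absurd h (Set.nonempty_iff_ne_empty.mp ⟨e, he, hv⟩)
  · exact h

lemma deg_as_ncard {S : Set G.E} (v : G.V) :
    G.deg S v = {e ∈ S | v ∈ G.ends e}.ncard := rfl

open Walk in
lemma decode_aux {S : Set G.E} (hS : G.IsCycle S) (x0 : G.V) :
    ∀ (n : ℕ) {a : G.V} (w : Walk G a x0),
      (∀ e ∈ w.edges, e ∈ S) → w.support.Nodup → w.edges ≠ [] → a ≠ x0 →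
      Fintype.card G.V ≤ n + w.support.length →
      ∃ w' : Walk G x0 x0, (∀ e ∈ w'.edges, e ∈ S) ∧ w'.support.tail.Nodup ∧
        w'.edges.Nodup ∧ w'.edges ≠ [] ∧ ∀ e ∈ w.edges, e ∈ w'.edges := by
  intro n
  induction n using Nat.strong_induction_on with
  | _ n ih =>
  intro a w hWS hnd hne hax hcard
  have hednd : w.edges.Nodup := edges_nodup_of_support_nodup w hnd
  -- the head has exactly one incident walk edge
  have hcount : w.edges.countP (fun e => decide (a ∈ G.ends e)) = 1 := by
    have := two_mul_count_support w a
    rw [List.count_eq_one_of_mem hnd (start_mem_support w)] at this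
    simp [hax] at this
    omega
  have hdeg2 : G.deg S a = 2 := by
    cases w with
    | nil => exact absurd rfl hax
    | @cons a b' c e₀ he₀ w' =>
      exact deg_eq_two hS (hWS e₀ (by simp)) (by rw [he₀]; simp)
  -- find a fresh incident edge e'
  have hsub : {e ∈ w.eset | a ∈ G.ends e} ⊆ {e ∈ S | a ∈ G.ends e} := by
    rintro e ⟨he, hae⟩; exact ⟨hWS e he, hae⟩
  have hn1 : G.deg w.eset a = 1 := by rw [deg_eset w hednd]; exact hcount
  have hex : ∃ e' ∈ S, a ∈ G.ends e' ∧ e' ∉ w.edges := by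
    by_contra hcon
    push_neg at hcon
    have hsub2 : {e ∈ S | a ∈ G.ends e} ⊆ {e ∈ w.eset | a ∈ G.ends e} := by
      rintro e ⟨heS, hae⟩
      exact ⟨hcon e heS hae, hae⟩
    have := Set.ncard_le_ncard hsub2 (Set.toFinite _)
    rw [← deg_as_ncard, ← deg_as_ncard, hn1, hdeg2] at this
    omega
  obtain ⟨e', he'S, hae', he'new⟩ := hex
  obtain ⟨p, q, hpq⟩ := ends_rep e'
  have hends' : ∃ a', G.ends e' = s(a', a) := by
    rw [hpq] at hae'
    rcases Sym2.mem_iff.mp hae' with rfl | rfl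
    · exact ⟨q, hpq.trans (Sym2.eq_swap)⟩
    · exact ⟨p, hpq⟩
  obtain ⟨a', he'ends⟩ := hends'
  have haa' : a' ≠ a := Walk.ends_ne he'ends
  by_cases ha' : a' ∈ w.support
  · -- must close up: a' = x0
    have hax0 : a' = x0 := by
      by_contra hax0
      have hcount' : w.edges.countP (fun e => decide (a' ∈ G.ends e)) = 2 := by
        have := two_mul_count_support w a'
        rw [List.count_eq_one_of_mem hnd ha'] at this
        simp only [if_neg haa', if_neg hax0] at this
        omega
      have hdeg2' : G.deg S a' = 2 := deg_eq_two hS he'S (by rw [he'ends]; simp)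
      have hins : insert e' {e ∈ w.eset | a' ∈ G.ends e} ⊆ {e ∈ S | a' ∈ G.ends e} := by
        rintro e he
        rcases Set.mem_insert_iff.mp he with rfl | ⟨hew, hae⟩
        · exact ⟨he'S, by rw [he'ends]; simp⟩
        · exact ⟨hWS e hew, hae⟩
      have hnotin : e' ∉ {e ∈ w.eset | a' ∈ G.ends e} := fun h => he'new h.1
      have h1 := Set.ncard_insert_of_notMem hnotin (Set.toFinite _)
      have h2 := Set.ncard_le_ncard hins (Set.toFinite _)
      have h3 : {e ∈ w.eset | a' ∈ G.ends e}.ncard = 2 := by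
        rw [← deg_as_ncard, deg_eset w hednd]; exact hcount'
      rw [h1, h3, ← deg_as_ncard, hdeg2'] at h2
      omega
    subst hax0
    refine ⟨Walk.cons e' he'ends w, ?_, ?_, ?_, ?_, ?_⟩
    · intro e he
      simp only [Walk.edges, List.mem_cons] at he
      rcases he with rfl | he
      · exact he'S
      · exact hWS e he
    · simpa using hnd
    · exact List.nodup_cons.mpr ⟨he'new, hednd⟩
    · simp
    · intro e he; simp [he]
  · -- extend
    have hlen : w.support.length < Fintype.card G.V := by
      have hnd' : (a' :: w.support).Nodup := List.nodup_cons.mpr ⟨ha', hnd⟩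
      have := List.Nodup.length_le_card hnd'
      simpa using this
    have hn0 : n ≠ 0 := by
      intro h
      subst h
      omega
    have hrec := ih (n - 1) (by omega) (Walk.cons e' he'ends w)
      (by
        intro e he
        simp only [Walk.edges, List.mem_cons] at he
        rcases he with rfl | he
        · exact he'S
        · exact hWS e he)
      (List.nodup_cons.mpr ⟨ha', hnd⟩)
      (by simp)
      (fun h => ha' (h ▸ end_mem_support w))
      (by simp only [Walk.support, List.length_cons]; omega)
    obtain ⟨w', h1, h2, h3, h4, h5⟩ := hrec
    exact ⟨w', h1, h2, h3, h4, fun e he => h5 e (by simp [he])⟩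

open Walk in
lemma IsCycle.exists_closed_walk {S : Set G.E} (hS : G.IsCycle S) :
    ∃ (a : G.V) (w : Walk G a a), w.eset = S ∧ w.edges ≠ [] ∧
      w.support.tail.Nodup ∧ w.edges.Nodup := by
  obtain ⟨e₀, he₀⟩ := hS.1
  obtain ⟨x0, x1, hx⟩ := ends_rep e₀
  have hx01 : x1 ≠ x0 := (Walk.ends_ne hx).symm
  have w₀ : Walk G x1 x0 := Walk.cons e₀ (hx.trans Sym2.eq_swap) Walk.nil
  obtain ⟨W, hWS, htail, hednd, hne, hcont⟩ :=
    decode_aux hS x0 (Fintype.card G.V) (Walk.cons e₀ (hx.trans Sym2.eq_swap) Walk.nil)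
      (by intro e he; simp only [Walk.edges, List.mem_cons] at he
          rcases he with rfl | he
          · exact he₀
          · simp at he)
      (by simp [hx01])
      (by simp)
      hx01
      (by simp only [Walk.support, List.length_cons, List.length_singleton]; omega)
  refine ⟨x0, W, ?_, hne, htail, hednd⟩
  have he₀W : e₀ ∈ W.edges := hcont e₀ (by simp)
  have hsub : W.eset ⊆ S := fun e he => hWS e he
  refine Set.Subset.antisymm hsub ?_
  intro f hf
  have hchain := hS.2.2 f hf e₀ he₀
  refine Relation.ReflTransGen.head_induction_on hchain he₀W ?_
  rintro g c ⟨hgS, hcS, v, hvg, hvc⟩ hrtg hcW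
  have hvW : v ∈ W.support := Walk.mem_support_of_mem_edges W hcW hvc
  have hcnt : W.edges.countP (fun e => decide (v ∈ G.ends e)) = 2 := by
    have hid := two_mul_count_support W v
    rw [count_support_closed W hne htail hvW] at hid
    rcases eq_or_ne v x0 with rfl | hvx
    · simp at hid; omega
    · simp [hvx] at hid; omega
  have hdegS : G.deg S v = 2 := deg_eq_two hS hcS hvc
  have hsub2 : {e ∈ W.eset | v ∈ G.ends e} ⊆ {e ∈ S | v ∈ G.ends e} := by
    rintro e ⟨he, hve⟩; exact ⟨hsub he, hve⟩
  have heq := Set.eq_of_subset_of_ncard_le hsub2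
    (by rw [← deg_as_ncard, hdegS, ← deg_as_ncard, deg_eset W hednd, hcnt]) (Set.toFinite _)
  have : g ∈ {e ∈ S | v ∈ G.ends e} := ⟨hgS, hvg⟩
  rw [← heq] at this
  exact this.1

end SGraph

namespace SGraph

variable {G : SGraph}

namespace Walk

lemma length_reverse {a b : G.V} (w : Walk G a b) : w.reverse.length = w.length := by
  simp [length]

lemma eq_of_edges_nil {a b : G.V} (w : Walk G a b) (h : w.edges = []) : a = b := by
  cases w with
  | nil => rfl
  | cons e he w' => simp at h

lemma edges_ne_nil_of_ne {a b : G.V} (w : Walk G a b) (h : a ≠ b) : w.edges ≠ [] :=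
  fun hc => h (eq_of_edges_nil w hc)

lemma mem_closed_tail {x v : G.V} (K : Walk G x x) (hne : K.edges ≠ []) :
    v ∈ K.support ↔ v ∈ K.support.tail := by
  constructor
  · intro h
    rw [support_head K] at h
    rcases List.mem_cons.mp h with rfl | h
    · exact end_mem_tail K hne
    · exact h
  · intro h
    rw [support_head K]
    exact List.mem_cons_of_mem _ h

lemma mem_rotate {x v c : G.V} (K : Walk G c c) (h : x ∈ K.support) (hne : K.edges ≠ []) :
    v ∈ (K.rotate h).support ↔ v ∈ K.support := by
  have hne' : (K.rotate h).edges ≠ [] := by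
    intro hc
    have := (rotate_edges K h).perm
    rw [hc] at this
    exact hne this.symm.eq_nil
  rw [mem_closed_tail _ hne', mem_closed_tail _ hne]
  exact (support_rotate K h).perm.mem_iff

/-- Splitting a closed walk with nodup tail at a vertex `y ≠ x` gives two
internally disjoint paths. -/
lemma closed_split {x y : G.V} (K : Walk G x x) (hy : y ∈ K.support) (hyx : y ≠ x)
    (htail : K.support.tail.Nodup) :
    (K.takeUntil y hy).support.Nodup ∧ (K.dropUntil y hy).support.Nodup ∧
    (∀ v ∈ (K.takeUntil y hy).support, v ∈ (K.dropUntil y hy).support → v = x ∨ v = y) := by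
  set B := K.takeUntil y hy with hB
  set C := K.dropUntil y hy with hC
  have hsplit : K.support = B.support ++ C.support.tail := support_take_drop K hy
  have hBhead : B.support = x :: B.support.tail := support_head B
  have hChead : C.support = y :: C.support.tail := support_head C
  have htl : K.support.tail = B.support.tail ++ C.support.tail := by
    rw [hsplit, hBhead]; simp
  rw [htl, List.nodup_append'] at htail
  obtain ⟨hBnd, hCnd, hdisj⟩ := htail
  have hyB : y ∈ B.support.tail := end_mem_tail B (edges_ne_nil_of_ne B (Ne.symm hyx))
  have hxC : x ∈ C.support.tail := end_mem_tail C (edges_ne_nil_of_ne C hyx)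
  have hBsup : B.support.Nodup := by
    rw [hBhead]
    exact List.nodup_cons.mpr ⟨fun hmem => hdisj hmem hxC, hBnd⟩
  have hCsup : C.support.Nodup := by
    rw [hChead]
    exact List.nodup_cons.mpr ⟨fun hmem => hdisj hyB hmem, hCnd⟩
  refine ⟨hBsup, hCsup, ?_⟩
  intro v hvB hvC
  rw [hBhead] at hvB
  rw [hChead] at hvC
  rcases List.mem_cons.mp hvB with rfl | hvB
  · exact Or.inl rfl
  · rcases List.mem_cons.mp hvC with rfl | hvC
    · exact Or.inr rfl
    · exact absurd hvC (fun hc => hdisj hvB hc)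

/-- Gluing a path, a connecting path, and a closing edge into a cycle. -/
lemma glue {x y b : G.V} (A : Walk G x y) (R : Walk G b y) (e : G.E)
    (he : G.ends e = s(b, x))
    (hAnd : A.support.Nodup) (hRnd : R.support.Nodup)
    (hAR : ∀ v ∈ A.support, v ∈ R.support → v = y)
    (hxR : x ∉ R.support) (hbA : b ∉ A.support) :
    ∃ w : Walk G x x, w.edges ≠ [] ∧ w.support.tail.Nodup ∧ w.edges.Nodup ∧
      (∀ v, v ∈ w.support ↔ v ∈ A.support ∨ v ∈ R.support) ∧
      (∀ f, f ∈ w.edges ↔ f ∈ A.edges ∨ f ∈ R.edges ∨ f = e) := by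
  have hAed : A.edges.Nodup := edges_nodup_of_support_nodup A hAnd
  have hRed : R.edges.Nodup := edges_nodup_of_support_nodup R hRnd
  have hxA : x ∉ A.support.tail := by
    have := support_head A ▸ hAnd
    exact (List.nodup_cons.mp this).1
  have hrevhead : R.support.reverse = y :: R.support.reverse.tail := by
    have := support_head R.reverse
    rwa [support_reverse] at this
  have hrevnd : R.support.reverse.Nodup := List.nodup_reverse.mpr hRnd
  have hyRtl : y ∉ R.support.reverse.tail := by
    have := hrevnd
    rw [hrevhead] at this
    exact (List.nodup_cons.mp this).1
  have hRtlnd : R.support.reverse.tail.Nodup := by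
    have := hrevnd
    rw [hrevhead] at this
    exact (List.nodup_cons.mp this).2
  have hmemRtl : ∀ v ∈ R.support.reverse.tail, v ∈ R.support := by
    intro v hv
    exact List.mem_reverse.mp (List.mem_of_mem_tail hv)
  refine ⟨A.append (R.reverse.append (Walk.cons e he Walk.nil)), by simp, ?_, ?_, ?_, ?_⟩
  · -- support tail nodup
    rw [tail_support_append, tail_support_append]
    simp only [support, List.tail_cons, support_reverse]
    rw [List.nodup_append']
    refine ⟨(List.nodup_cons.mp (support_head A ▸ hAnd)).2, ?_, ?_⟩
    · rw [List.nodup_append']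
      refine ⟨?_, List.nodup_singleton x, ?_⟩
      · exact hRtlnd
      · intro v hv hv'
        rw [List.mem_singleton] at hv'
        subst hv'
        exact hxR (hmemRtl _ hv)
    · intro v hv hv'
      have hvA : v ∈ A.support := List.mem_of_mem_tail hv
      rw [List.mem_append] at hv'
      rcases hv' with hv' | hv'
      · have hvR : v ∈ R.support := hmemRtl _ hv'
        have := hAR v hvA hvR
        subst this
        exact hyRtl hv'
      · rw [List.mem_singleton] at hv'
        subst hv'
        exact hxA hv
  · -- edges nodup
    rw [edges_append, edges_append]
    simp only [edges, edges_reverse]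
    rw [List.nodup_append']
    refine ⟨hAed, ?_, ?_⟩
    · rw [List.nodup_append']
      refine ⟨List.nodup_reverse.mpr hRed, List.nodup_singleton e, ?_⟩
      · intro f hf hf'
        rw [List.mem_singleton] at hf'
        subst hf'
        have : x ∈ R.support := mem_support_of_mem_edges R (List.mem_reverse.mp hf)
          (by rw [he]; simp)
        exact hxR this
    · intro f hf hf'
      rw [List.mem_append] at hf'
      rcases hf' with hf' | hf'
      · have hfR : f ∈ R.edges := List.mem_reverse.mp hf'
        obtain ⟨p, q, hpq⟩ := ends_rep f
        have hp : p ∈ A.support := mem_support_of_mem_edges A hf (by rw [hpq]; simp)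
        have hq : q ∈ A.support := mem_support_of_mem_edges A hf (by rw [hpq]; simp)
        have hp' : p ∈ R.support := mem_support_of_mem_edges R hfR (by rw [hpq]; simp)
        have hq' : q ∈ R.support := mem_support_of_mem_edges R hfR (by rw [hpq]; simp)
        have h1 := hAR p hp hp'
        have h2 := hAR q hq hq'
        exact ends_ne hpq (h1.trans h2.symm)
      · rw [List.mem_singleton] at hf'
        subst hf'
        have : b ∈ A.support := mem_support_of_mem_edges A hf (by rw [he]; simp)
        exact hbA this
  · -- support membership
    intro v
    rw [mem_support_append_iff, mem_support_append_iff]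
    simp only [support, List.mem_cons, List.not_mem_nil, or_false, support_reverse,
      List.mem_reverse]
    have hbR : b ∈ R.support := start_mem_support R
    have hxA' : x ∈ A.support := start_mem_support A
    constructor
    · rintro (h | h | rfl | rfl)
      exacts [Or.inl h, Or.inr h, Or.inr hbR, Or.inl hxA']
    · rintro (h | h)
      exacts [Or.inl h, Or.inr (Or.inl h)]
  · -- edge membership
    intro f
    rw [edges_append, edges_append]
    simp only [edges, edges_reverse, List.mem_append, List.mem_cons, List.not_mem_nil,
      or_false, List.mem_reverse] <;> tauto

end Walk

end SGraph

namespace SGraph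

variable {G : SGraph}

open Walk in
lemma common_cycle (hcard : 3 ≤ Fintype.card G.V)
    (hconn : ∀ x a b : G.V, a ≠ x → b ≠ x → ∃ w : Walk G a b, ∀ v ∈ w.support, v ≠ x) :
    ∀ a b : G.V, a ≠ b → ∃ (c : G.V) (w : Walk G c c), w.edges ≠ [] ∧
      w.support.tail.Nodup ∧ w.edges.Nodup ∧ a ∈ w.support ∧ b ∈ w.support := by
  classical
  have hthird : ∀ a b : G.V, ∃ x : G.V, x ≠ a ∧ x ≠ b := by
    intro a b
    have hne : (({a, b} : Finset G.V)ᶜ).Nonempty := by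
      rw [← Finset.card_pos, Finset.card_compl]
      have h1 := Finset.card_insert_le a ({b} : Finset G.V)
      simp only [Finset.card_singleton] at h1
      omega
    obtain ⟨x, hx⟩ := hne
    simp only [Finset.mem_compl, Finset.mem_insert, Finset.mem_singleton, not_or] at hx
    exact ⟨x, hx.1, hx.2⟩
  have hex : ∀ a b : G.V, a ≠ b → ∃ w : Walk G a b, True := by
    intro a b hab
    obtain ⟨x, hxa, hxb⟩ := hthird a b
    obtain ⟨w, -⟩ := hconn x a b (fun h => hxa h.symm) (fun h => hxb h.symm)
    exact ⟨w, trivial⟩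
  -- the base case: an edge between a and b gives a cycle through a, b
  have hbase : ∀ (a b : G.V) (e : G.E), a ≠ b → G.ends e = s(a, b) →
      ∃ (c : G.V) (w : Walk G c c), w.edges ≠ [] ∧
        w.support.tail.Nodup ∧ w.edges.Nodup ∧ a ∈ w.support ∧ b ∈ w.support := by
    intro a b e hab he
    obtain ⟨c, hca, hcb⟩ := hthird a b
    obtain ⟨w1, hw1⟩ := hconn a b c (Ne.symm hab) hca
    obtain ⟨w2, hw2⟩ := hconn b c a hcb hab
    set Q := (w1.append w2).bypass with hQ
    have hQnd : Q.support.Nodup := bypass_support_nodup _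
    have hQsub : Q.support ⊆ w1.support ++ w2.support.tail := by
      have := support_bypass_subset (w1.append w2)
      rwa [support_append] at this
    have heQ : e ∉ Q.edges := by
      intro hmem
      have := edges_bypass_subset (w1.append w2) hmem
      rw [edges_append, List.mem_append] at this
      rcases this with h | h
      · exact hw1 a (mem_support_of_mem_edges w1 h (by rw [he]; simp)) rfl
      · exact hw2 b (mem_support_of_mem_edges w2 h (by rw [he]; simp)) rfl
    refine ⟨a, Walk.cons e he Q, by simp, by simpa using hQnd, ?_, by simp, ?_⟩
    · exact List.nodup_cons.mpr ⟨heQ, edges_nodup_of_support_nodup Q hQnd⟩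
    · simp only [support, List.mem_cons]
      exact Or.inr (start_mem_support Q)
  have main : ∀ n : ℕ, ∀ a b : G.V, a ≠ b → (∃ w : Walk G a b, w.length ≤ n) →
      ∃ (c : G.V) (w : Walk G c c), w.edges ≠ [] ∧
        w.support.tail.Nodup ∧ w.edges.Nodup ∧ a ∈ w.support ∧ b ∈ w.support := by
    intro n
    induction n using Nat.strong_induction_on with
    | _ n ih =>
    intro a b hab hwex
    obtain ⟨wit, hwit⟩ := hwex
    have hPex : ∃ m, ∃ w : Walk G a b, w.length = m := ⟨wit.length, wit, rfl⟩
    set m := Nat.find hPex with hmdef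
    obtain ⟨w0, hw0⟩ := Nat.find_spec hPex
    have hm_le : m ≤ n := le_trans (Nat.find_min' hPex ⟨wit, rfl⟩) hwit
    -- decompose the last edge of w0
    rcases hrev : w0.reverse with _ | ⟨e', he', w₂⟩
    · -- reverse is nil: a = b, contradiction
      exfalso
      have : w0.length = 0 := by
        have := congrArg Walk.length hrev
        rwa [length_reverse] at this
      have : w0.edges = [] := List.length_eq_zero_iff.mp this
      exact hab (eq_of_edges_nil w0 this)
    · rename_i x
      -- e' : ends = s(b, x), w₂ : Walk x a
      have hlen : w₂.length + 1 = m := by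
        have h := congrArg Walk.length hrev
        rw [length_reverse, hw0, length_cons] at h
        omega
      by_cases hxa : x = a
      · -- base case: single edge between a and b
        subst hxa
        exact hbase _ b e' hab (he'.trans Sym2.eq_swap)
      · -- x ≠ a; also w₂.length ≥ 1
        have hax : a ≠ x := Ne.symm hxa
        have hw2len : w₂.length ≠ 0 := by
          intro h0
          exact hxa (eq_of_edges_nil w₂ (List.length_eq_zero_iff.mp h0))
        obtain ⟨c0, K, Kne, Ktail, Ked, haK, hxK⟩ :=
          ih (m - 1) (by omega) a x hax ⟨w₂.reverse, by rw [length_reverse]; omega⟩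
        by_cases hbK : b ∈ K.support
        · exact ⟨c0, K, Kne, Ktail, Ked, haK, hbK⟩
        · have hbx : b ≠ x := fun h => hbK (h ▸ hxK)
          obtain ⟨R0, hR0⟩ := hconn x b a hbx hax
          set R1 := R0.bypass with hR1
          have hR1nd : R1.support.Nodup := bypass_support_nodup _
          have hR1sub : R1.support ⊆ R0.support := support_bypass_subset _
          obtain ⟨y, R', hyK, hfirst, hsuppre, hedpre⟩ :=
            exists_takeUntilP R1 (· ∈ K.support) ⟨a, end_mem_support R1, haK⟩
          have hR'nd : R'.support.Nodup := hR1nd.sublist hsuppre.sublist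
          have hR'sub : ∀ v ∈ R'.support, v ∈ R1.support :=
            fun v hv => hsuppre.sublist.mem hv
          have havoidx : ∀ v ∈ R'.support, v ≠ x :=
            fun v hv => hR0 v (hR1sub (hR'sub v hv))
          have hyx : y ≠ x := havoidx y (end_mem_support R')
          set K' := K.rotate hxK with hK'
          have K'tail : K'.support.tail.Nodup := (support_rotate K hxK).nodup_iff.mpr Ktail
          have K'ed : K'.edges.Nodup := (rotate_edges K hxK).perm.nodup_iff.mpr Ked
          have K'ne : K'.edges ≠ [] := by
            intro hc
            have := (rotate_edges K hxK).perm
            rw [hc] at this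
            exact Kne this.symm.eq_nil
          have hmemK' : ∀ v, v ∈ K'.support ↔ v ∈ K.support :=
            fun v => mem_rotate K hxK Kne
          have haK' : a ∈ K'.support := (hmemK' a).mpr haK
          have hyK' : y ∈ K'.support := (hmemK' y).mpr hyK
          obtain ⟨hBnd, hCnd, hBC⟩ := closed_split K' hyK' hyx K'tail
          set B := K'.takeUntil y hyK' with hBdef
          set C := K'.dropUntil y hyK' with hCdef
          have hbK' : b ∉ K'.support := fun h => hbK ((hmemK' b).mp h)
          have hARgen : ∀ (v : G.V), v ∈ K'.support → v ∈ R'.support → v = y := by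
            intro v hv hv'
            exact hfirst v hv' ((hmemK' v).mp hv)
          have hsplitmem : a ∈ B.support ∨ a ∈ C.support := by
            have := support_take_drop K' hyK'
            rw [this, List.mem_append] at haK'
            rcases haK' with h | h
            · exact Or.inl h
            · exact Or.inr (List.mem_of_mem_tail h)
          rcases hsplitmem with haB | haC
          · obtain ⟨W, W1, W2, W3, W4, -⟩ :=
              glue B R' e' he' hBnd hR'nd
                (fun v hv hv' => hARgen v (support_takeUntil_subset K' hyK' hv) hv')
                (fun h => havoidx x h rfl)
                (fun h => hbK' (support_takeUntil_subset K' hyK' h))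
            refine ⟨x, W, W1, W2, W3, ?_, ?_⟩
            · exact (W4 a).mpr (Or.inl haB)
            · exact (W4 b).mpr (Or.inr (start_mem_support R'))
          · obtain ⟨W, W1, W2, W3, W4, -⟩ :=
              glue C.reverse R' e' he'
                (by rw [support_reverse]; exact List.nodup_reverse.mpr hCnd)
                hR'nd
                (fun v hv hv' => hARgen v
                  (support_dropUntil_subset K' hyK' (by
                    rw [support_reverse, List.mem_reverse] at hv; exact hv)) hv')
                (fun h => havoidx x h rfl)
                (fun h => hbK' (support_dropUntil_subset K' hyK' (by
                  rw [support_reverse, List.mem_reverse] at h; exact h)))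
            refine ⟨x, W, W1, W2, W3, ?_, ?_⟩
            · exact (W4 a).mpr (Or.inl (by rw [support_reverse, List.mem_reverse]; exact haC))
            · exact (W4 b).mpr (Or.inr (start_mem_support R'))
  intro a b hab
  obtain ⟨w, -⟩ := hex a b hab
  exact main w.length a b hab ⟨w, le_rfl⟩

end SGraph

namespace SGraph

variable {G : SGraph}

noncomputable def epair (G : SGraph) (e : G.E) : G.V × G.V :=
  ⟨(ends_rep e).choose, (ends_rep e).choose_spec.choose⟩

lemma epair_spec (G : SGraph) (e : G.E) :
    G.ends e = s((G.epair e).1, (G.epair e).2) :=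
  (ends_rep e).choose_spec.choose_spec

lemma epair_fst_mem (G : SGraph) (e : G.E) : (G.epair e).1 ∈ G.ends e := by
  rw [epair_spec G e]
  rcases hp : G.epair e with ⟨p, q⟩
  simp

lemma epair_snd_mem (G : SGraph) (e : G.E) : (G.epair e).2 ∈ G.ends e := by
  rw [epair_spec G e]
  rcases hp : G.epair e with ⟨p, q⟩
  simp

lemma epair_ne (G : SGraph) (e : G.E) : (G.epair e).1 ≠ (G.epair e).2 :=
  Walk.ends_ne (epair_spec G e)

section Aux

variable (u v₁ v₂ : G.V) (Tset : Set G.V)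
variable (hv₁ : v₁ ≠ u) (hv₂ : v₂ ≠ u) (hT : ∀ t ∈ Tset, t ≠ u)

/-- The auxiliary graph: `G - u` plus an apex `⋆` (= `inr true`) joined to `Tset` and
an apex `▪` (= `inr false`) joined to `v₁, v₂`. -/
@[reducible] noncomputable def AuxG : SGraph where
  V := {v : G.V // v ≠ u} ⊕ Bool
  E := {e : G.E // u ∉ G.ends e} ⊕ (↥Tset ⊕ Bool)
  fintV := by infer_instance
  decV := by infer_instance
  fintE := by classical exact inferInstance
  decE := by classical exact inferInstance
  ends := fun e'' =>
    match e'' with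
    | Sum.inl ⟨e, he⟩ =>
        s(Sum.inl ⟨(G.epair e).1, fun h => he (h ▸ epair_fst_mem G e)⟩,
          Sum.inl ⟨(G.epair e).2, fun h => he (h ▸ epair_snd_mem G e)⟩)
    | Sum.inr (Sum.inl t) => s(Sum.inr true, Sum.inl ⟨t.1, hT t.1 t.2⟩)
    | Sum.inr (Sum.inr b) =>
        s(Sum.inr false, Sum.inl (if b then ⟨v₁, hv₁⟩ else ⟨v₂, hv₂⟩))
  loopless := by
    rintro (⟨e, he⟩ | (t | b)) h
    · simp only [Sym2.isDiag_iff_proj_eq] at h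
      exact epair_ne G e (congrArg Subtype.val (Sum.inl.inj h))
    · simp only [Sym2.isDiag_iff_proj_eq] at h
      simp at h
    · simp only [Sym2.isDiag_iff_proj_eq] at h
      simp at h
  sgn := fun _ => 1

variable {u v₁ v₂ Tset}

local notation "H" => AuxG u v₁ v₂ Tset hv₁ hv₂ hT

/-- Projection of auxiliary vertices back to `G`. -/
def projV (x : {v : G.V // v ≠ u} ⊕ Bool) : G.V :=
  match x with
  | Sum.inl t => t.1
  | Sum.inr _ => u

lemma aux_ends_inl (e : G.E) (hu : u ∉ G.ends e) {a b : G.V} (he : G.ends e = s(a, b))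
    (ha : a ≠ u) (hb : b ≠ u) :
    (H).ends (Sum.inl ⟨e, hu⟩) = s(Sum.inl ⟨a, ha⟩, Sum.inl ⟨b, hb⟩) := by
  show s(_, _) = _
  rcases Sym2.eq_iff.mp ((epair_spec G e).symm.trans he) with ⟨hp, hq⟩ | ⟨hp, hq⟩
  · rw [Sym2.eq_iff]
    left
    exact ⟨congrArg Sum.inl (Subtype.ext hp), congrArg Sum.inl (Subtype.ext hq)⟩
  · rw [Sym2.eq_iff]
    right
    exact ⟨congrArg Sum.inl (Subtype.ext hp), congrArg Sum.inl (Subtype.ext hq)⟩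

lemma aux_ends_star (t : G.V) (ht : t ∈ Tset) :
    (H).ends (Sum.inr (Sum.inl ⟨t, ht⟩)) = s(Sum.inr true, Sum.inl ⟨t, hT t ht⟩) := rfl

lemma aux_ends_dot (b : Bool) :
    (H).ends (Sum.inr (Sum.inr b)) =
      s(Sum.inr false, Sum.inl (if b then ⟨v₁, hv₁⟩ else ⟨v₂, hv₂⟩)) := rfl

/-- An auxiliary edge whose two endpoints avoid the apexes comes from `G`. -/
lemma aux_ends_cases (e'' : (H).E) {a b : (H).V}
    (h : (H).ends e'' = s(a, b)) (ha : ∀ bb, a ≠ Sum.inr bb) (hb : ∀ bb, b ≠ Sum.inr bb) :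
    ∃ (e : G.E) (hu : u ∉ G.ends e), e'' = Sum.inl ⟨e, hu⟩ ∧
      G.ends e = s(projV a, projV b) := by
  match e'' with
  | Sum.inl ⟨e, hue⟩ =>
    refine ⟨e, hue, rfl, ?_⟩
    have h' := h
    rw [show (H).ends (Sum.inl ⟨e, hue⟩) = s(Sum.inl ⟨(G.epair e).1, _⟩,
      Sum.inl ⟨(G.epair e).2, _⟩) from rfl] at h'
    rcases Sym2.eq_iff.mp h' with ⟨hp, hq⟩ | ⟨hp, hq⟩
    · rw [epair_spec G e, ← hp, ← hq]
      rfl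
    · rw [epair_spec G e, ← hp, ← hq]
      exact Sym2.eq_swap
  | Sum.inr (Sum.inl t) =>
    exfalso
    rw [aux_ends_star hv₁ hv₂ hT t.1 t.2] at h
    rcases Sym2.eq_iff.mp h with ⟨hp, _⟩ | ⟨hp, _⟩
    · exact ha true hp.symm
    · exact hb true hp.symm
  | Sum.inr (Sum.inr bb) =>
    exfalso
    rw [aux_ends_dot hv₁ hv₂ hT bb] at h
    rcases Sym2.eq_iff.mp h with ⟨hp, _⟩ | ⟨hp, _⟩
    · exact ha false hp.symm
    · exact hb false hp.symm

/-- Transfer a walk of `G` avoiding `u` into the auxiliary graph. -/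
lemma toAux {a b : G.V} (w : Walk G a b) (hw : ∀ v ∈ w.support, v ≠ u)
    (ha : a ≠ u) (hb : b ≠ u) :
    ∃ w' : Walk (H) (Sum.inl ⟨a, ha⟩) (Sum.inl ⟨b, hb⟩),
      ∀ v'' ∈ w'.support, ∃ (t : G.V) (ht : t ≠ u),
        v'' = Sum.inl ⟨t, ht⟩ ∧ t ∈ w.support := by
  induction w with
  | nil =>
    exact ⟨Walk.nil, by
      intro v'' hv''
      simp only [Walk.support, List.mem_singleton] at hv''
      exact ⟨_, ha, hv'', by simp⟩⟩
  | @cons a b₂ c e he w ih =>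
    have hb₂ : b₂ ≠ u :=
      hw b₂ (List.mem_cons_of_mem _ (Walk.start_mem_support w))
    have hu : u ∉ G.ends e := by
      rw [he]
      simp only [Sym2.mem_iff]
      push_neg
      constructor
      · exact fun h => (hw a (by simp [Walk.support]) h.symm).elim
      · exact fun h => (hb₂ h.symm).elim
    obtain ⟨w', hw'⟩ := ih (fun v hv => hw v (by simp [Walk.support, hv])) hb₂ hb
    refine ⟨Walk.cons (Sum.inl ⟨e, hu⟩) (aux_ends_inl hv₁ hv₂ hT e hu he ha hb₂) w', ?_⟩
    intro v'' hv''
    simp only [Walk.support, List.mem_cons] at hv''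
    rcases hv'' with rfl | hv''
    · exact ⟨a, ha, rfl, by simp [Walk.support]⟩
    · obtain ⟨t, ht, h1, h2⟩ := hw' v'' hv''
      exact ⟨t, ht, h1, by simp [Walk.support, h2]⟩

/-- Transfer a walk of the auxiliary graph avoiding the apexes back to `G`. -/
lemma fromAux {a b : (H).V} (w : Walk (H) a b)
    (hsup : ∀ v'' ∈ w.support, ∀ bb, v'' ≠ Sum.inr bb) :
    ∃ w' : Walk G (projV a) (projV b), w'.support = w.support.map projV := by
  induction w with
  | nil => exact ⟨Walk.nil, by simp [Walk.support]⟩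
  | @cons a b₂ c e'' he'' w₂ ih =>
    have ha : ∀ bb, a ≠ Sum.inr bb := hsup a (by simp [Walk.support])
    have hb₂ : ∀ bb, b₂ ≠ Sum.inr bb :=
      hsup b₂ (List.mem_cons_of_mem _ (Walk.start_mem_support w₂))
    obtain ⟨e, hu, -, hge⟩ := aux_ends_cases hv₁ hv₂ hT e'' he'' ha hb₂
    obtain ⟨w', hw'⟩ :=
      ih (fun v hv => hsup v (List.mem_cons_of_mem _ hv))
    exact ⟨Walk.cons e hge w', by simp [Walk.support, hw']⟩
  
end Aux

end SGraph

namespace SGraph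

variable {G : SGraph}

section Aux2

variable {u v₁ v₂ : G.V} {Tset : Set G.V}
variable (hv₁ : v₁ ≠ u) (hv₂ : v₂ ≠ u) (hT : ∀ t ∈ Tset, t ≠ u)

local notation "H" => AuxG u v₁ v₂ Tset hv₁ hv₂ hT

lemma aux_hconn (hv12 : v₁ ≠ v₂)
    (hcon : ∀ S : Set G.V, S.ncard < 3 → G.ConnOutside S)
    (hT2 : ∃ t₁ ∈ Tset, ∃ t₂ ∈ Tset, t₁ ≠ t₂) :
    ∀ x a b : (H).V, a ≠ x → b ≠ x →
      ∃ w : Walk (H) a b, ∀ v ∈ w.support, v ≠ x := by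
  classical
  intro x a b hax hbx
  -- an avoidance set in G encoding x
  obtain ⟨S, hSu, hS3, hSmem, hSinl, hSpair⟩ :
      ∃ S : Set G.V, u ∈ S ∧ S.ncard < 3 ∧
        (∀ (t : G.V) (ht : t ≠ u), Sum.inl ⟨t, ht⟩ ≠ x → t ∉ S) ∧
        (∀ (t : G.V) (ht : t ≠ u), t ∉ S → Sum.inl ⟨t, ht⟩ ≠ x) ∧
        (∀ p q : G.V, p ≠ u → q ≠ u → p ≠ q → p ∉ S ∨ q ∉ S) := by
    rcases x with xt | xb
    · refine ⟨{u, xt.1}, by simp, ?_, ?_, ?_, ?_⟩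
      · calc ({u, xt.1} : Set G.V).ncard ≤ ({xt.1} : Set G.V).ncard + 1 :=
              Set.ncard_insert_le _ _
          _ ≤ 2 := by rw [Set.ncard_singleton]
          _ < 3 := by omega
      · intro t ht hne hmem
        rcases hmem with rfl | hmem
        · exact ht rfl
        · rw [Set.mem_singleton_iff] at hmem
          exact hne (congrArg Sum.inl (Subtype.ext hmem))
      · intro t ht hmem heq
        rw [Sum.inl.injEq] at heq
        exact hmem (Or.inr (by rw [Set.mem_singleton_iff, ← heq]))
      · intro p q hp hq hpq
        by_contra hcon2
        push_neg at hcon2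
        obtain ⟨h1, h2⟩ := hcon2
        rcases h1 with rfl | h1
        · exact hp rfl
        · rcases h2 with rfl | h2
          · exact hq rfl
          · rw [Set.mem_singleton_iff] at h1 h2
            exact hpq (h1.trans h2.symm)
    · refine ⟨{u}, rfl, by simp, ?_, ?_, ?_⟩
      · intro t ht _ hmem
        exact ht hmem
      · intro t ht _ heq
        simp at heq
      · intro p q hp hq _
        exact Or.inl (fun h => hp h)
  -- an entry path from any vertex ≠ x into the inl part outside S
  have entry : ∀ p : (H).V, p ≠ x →
      ∃ (t : G.V) (ht : t ≠ u) (wpre : Walk (H) p (Sum.inl ⟨t, ht⟩)),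
        (∀ v ∈ wpre.support, v ≠ x) ∧ t ∉ S := by
    intro p hpx
    match p with
    | Sum.inl ⟨t, ht⟩ =>
      refine ⟨t, ht, Walk.nil, ?_, hSmem t ht hpx⟩
      intro v hv
      simp only [Walk.support, List.mem_singleton] at hv
      subst hv
      exact hpx
    | Sum.inr true =>
      obtain ⟨t₁, ht₁, t₂, ht₂, ht12⟩ := hT2
      have hpick : ∃ t, ∃ htm : t ∈ Tset, t ∉ S := by
        rcases hSpair t₁ t₂ (hT t₁ ht₁) (hT t₂ ht₂) ht12 with h | h
        · exact ⟨t₁, ht₁, h⟩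
        · exact ⟨t₂, ht₂, h⟩
      obtain ⟨t, htm, htS⟩ := hpick
      refine ⟨t, hT t htm, Walk.cons (Sum.inr (Sum.inl ⟨t, htm⟩))
        (aux_ends_star hv₁ hv₂ hT t htm) Walk.nil, ?_, htS⟩
      intro v hv
      simp only [Walk.support, List.mem_cons, List.mem_singleton, List.not_mem_nil,
        or_false] at hv
      rcases hv with rfl | rfl
      · exact hpx
      · exact hSinl t (hT t htm) htS
    | Sum.inr false =>
      have hpick : ∃ t, ∃ htne : t ≠ u, ((t = v₁) ∨ (t = v₂)) ∧ t ∉ S := by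
        rcases hSpair v₁ v₂ hv₁ hv₂ hv12 with h | h
        · exact ⟨v₁, hv₁, Or.inl rfl, h⟩
        · exact ⟨v₂, hv₂, Or.inr rfl, h⟩
      obtain ⟨t, htne, hor, htS⟩ := hpick
      have hbb : ∃ bb : Bool, (H).ends (Sum.inr (Sum.inr bb)) =
          s(Sum.inr false, Sum.inl ⟨t, htne⟩) := by
        rcases hor with rfl | rfl
        · exact ⟨true, by rw [aux_ends_dot]; simp⟩
        · exact ⟨false, by rw [aux_ends_dot]; simp⟩
      obtain ⟨bb, hbb⟩ := hbb
      refine ⟨t, htne, Walk.cons (Sum.inr (Sum.inr bb)) hbb Walk.nil, ?_, htS⟩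
      intro v hv
      simp only [Walk.support, List.mem_cons, List.mem_singleton, List.not_mem_nil,
        or_false] at hv
      rcases hv with rfl | rfl
      · exact hpx
      · exact hSinl t htne htS
  obtain ⟨ta, hta, wa, hwa, htaS⟩ := entry a hax
  obtain ⟨tb, htb, wb, hwb, htbS⟩ := entry b hbx
  obtain ⟨wg, hwg⟩ := Walk.reach_to_walk (hcon S hS3 ta tb htaS htbS) htaS
  have hwgu : ∀ v ∈ wg.support, v ≠ u := fun v hv h => (hwg v hv) (h ▸ hSu)
  obtain ⟨wH, hwH⟩ := toAux hv₁ hv₂ hT wg hwgu hta htb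
  refine ⟨wa.append (wH.append wb.reverse), ?_⟩
  intro v hv
  rw [Walk.mem_support_append_iff] at hv
  rcases hv with hv | hv
  · exact hwa v hv
  · rw [Walk.mem_support_append_iff] at hv
    rcases hv with hv | hv
    · obtain ⟨t, ht, rfl, htwg⟩ := hwH v hv
      exact hSinl t ht (fun hc => hwg t htwg hc)
    · rw [Walk.support_reverse, List.mem_reverse] at hv
      exact hwb v hv

end Aux2

end SGraph

namespace SGraph

variable {G : SGraph}

open Walk in
lemma final_glue {u v₁ v₂ t₁ t₂ : G.V} {e₁ e₂ : G.E} {TS : Set G.V}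
    (h₁ : G.ends e₁ = s(u, v₁)) (h₂ : G.ends e₂ = s(u, v₂)) (hv12 : v₁ ≠ v₂)
    (p₁ : Walk G v₁ t₁) (p₂ : Walk G v₂ t₂) (M : Walk G t₁ t₂)
    (hp₁nd : p₁.support.Nodup) (hp₂nd : p₂.support.Nodup)
    (hMnd : M.support.Nodup)
    (hdisj : ∀ v ∈ p₁.support, v ∉ p₂.support)
    (hp₁T : ∀ v ∈ p₁.support, v ∈ TS → v = t₁)
    (hp₂T : ∀ v ∈ p₂.support, v ∈ TS → v = t₂)
    (hMT : ∀ v ∈ M.support, v ∈ TS)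
    (hu₁ : u ∉ p₁.support) (hu₂ : u ∉ p₂.support) (huT : u ∉ TS) :
    ∃ C : Set G.E, G.IsCycle C ∧ e₁ ∈ C ∧ e₂ ∈ C ∧
      G.signOf C = G.sgn e₁ * ((p₁.edges.map G.sgn).prod *
        ((M.edges.map G.sgn).prod * ((p₂.edges.map G.sgn).prod * G.sgn e₂))) := by
  have huv₁ : u ≠ v₁ := ends_ne h₁
  have huv₂ : u ≠ v₂ := ends_ne h₂
  have ht₁M : t₁ ∉ M.support.tail := by
    have := support_head M ▸ hMnd
    exact (List.nodup_cons.mp this).1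
  have hp₂rev_head : p₂.reverse.support = t₂ :: p₂.reverse.support.tail := by
    have := support_head p₂.reverse
    exact this
  have hp₂revnd : p₂.reverse.support.Nodup := by
    rw [support_reverse]; exact List.nodup_reverse.mpr hp₂nd
  have ht₂p₂rev : t₂ ∉ p₂.reverse.support.tail := by
    have := hp₂rev_head ▸ hp₂revnd
    exact (List.nodup_cons.mp this).1
  have hmem_p₂rev : ∀ v ∈ p₂.reverse.support.tail, v ∈ p₂.support := by
    intro v hv
    have := List.mem_of_mem_tail hv
    rwa [support_reverse, List.mem_reverse] at this
  have hMtl : ∀ v ∈ M.support.tail, v ∈ M.support := fun v hv => List.mem_of_mem_tail hv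
  -- the closed walk
  set h₂' : G.ends e₂ = s(v₂, u) := h₂.trans Sym2.eq_swap with hh₂'
  set W : Walk G u u := Walk.cons e₁ h₁
    (p₁.append (M.append (p₂.reverse.append (Walk.cons e₂ h₂' Walk.nil)))) with hW
  have hWsupp : W.support.tail =
      p₁.support ++ (M.support.tail ++ (p₂.reverse.support.tail ++ [u])) := by
    rw [hW]
    simp only [Walk.support, List.tail_cons, support_append]
    simp [Walk.support]
  have hWedges : W.edges =
      e₁ :: (p₁.edges ++ (M.edges ++ (p₂.edges.reverse ++ [e₂]))) := by
    rw [hW]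
    simp only [Walk.edges, edges_append, edges_reverse]
  -- supports of parts avoid u
  have hMu : u ∉ M.support := fun h => huT (hMT u h)
  -- nodup of support tail
  have hsup_nd : W.support.tail.Nodup := by
    rw [hWsupp]
    rw [List.nodup_append']
    refine ⟨hp₁nd, ?_, ?_⟩
    · rw [List.nodup_append']
      refine ⟨(List.nodup_cons.mp (support_head M ▸ hMnd)).2, ?_, ?_⟩
      · rw [List.nodup_append']
        refine ⟨(List.nodup_cons.mp (hp₂rev_head ▸ hp₂revnd)).2, List.nodup_singleton u, ?_⟩
        · intro v hv hv'
          rw [List.mem_singleton] at hv'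
          exact hu₂ (hv' ▸ hmem_p₂rev _ hv)
      · intro v hv hv'
        rw [List.mem_append] at hv'
        rcases hv' with hv' | hv'
        · have h1 : v ∈ TS := hMT v (hMtl v hv)
          have h2 := hp₂T v (hmem_p₂rev _ hv') h1
          subst h2
          exact ht₂p₂rev hv'
        · rw [List.mem_singleton] at hv'
          exact hMu (hv' ▸ hMtl v hv)
    · intro v hv hv'
      rw [List.mem_append] at hv'
      rcases hv' with hv' | hv'
      · have h1 : v ∈ TS := hMT v (hMtl v hv')
        have h2 := hp₁T v hv h1
        subst h2
        exact ht₁M hv'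
      · rw [List.mem_append] at hv'
        rcases hv' with hv' | hv'
        · exact hdisj v hv (hmem_p₂rev _ hv')
        · rw [List.mem_singleton] at hv'
          exact hu₁ (hv' ▸ hv)
  -- edges nodup
  have hp₁ed : p₁.edges.Nodup := edges_nodup_of_support_nodup p₁ hp₁nd
  have hp₂ed : p₂.edges.Nodup := edges_nodup_of_support_nodup p₂ hp₂nd
  have hMed : M.edges.Nodup := edges_nodup_of_support_nodup M hMnd
  have cross : ∀ (z : G.V) {α β γ δ : G.V} (q : Walk G α β) (r : Walk G γ δ),
      (∀ v ∈ q.support, v ∈ r.support → v = z) →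
      ∀ f, f ∈ q.edges → f ∈ r.edges → False := by
    intro z α β γ δ q r hz f hfq hfr
    obtain ⟨p, qq, hpq⟩ := ends_rep f
    have h1 := hz p (mem_support_of_mem_edges q hfq (by rw [hpq]; simp))
      (mem_support_of_mem_edges r hfr (by rw [hpq]; simp))
    have h2 := hz qq (mem_support_of_mem_edges q hfq (by rw [hpq]; simp))
      (mem_support_of_mem_edges r hfr (by rw [hpq]; simp))
    exact ends_ne hpq (h1.trans h2.symm)
  have he₂mem : ∀ {α β : G.V} (q : Walk G α β), u ∉ q.support → e₂ ∉ q.edges := by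
    intro α β q hq hmem
    exact hq (mem_support_of_mem_edges q hmem (by rw [h₂]; simp))
  have he₁mem : ∀ {α β : G.V} (q : Walk G α β), u ∉ q.support → e₁ ∉ q.edges := by
    intro α β q hq hmem
    exact hq (mem_support_of_mem_edges q hmem (by rw [h₁]; simp))
  have he₁₂ : e₁ ≠ e₂ := by
    intro h
    rw [h, h₂] at h₁
    rcases Sym2.eq_iff.mp h₁ with ⟨-, hq⟩ | ⟨hp, -⟩
    · exact hv12 hq.symm
    · exact huv₁ hp
  have hed_nd : W.edges.Nodup := by
    rw [hWedges]
    rw [List.nodup_cons]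
    constructor
    · intro hmem
      rw [List.mem_append] at hmem
      rcases hmem with h | h
      · exact he₁mem p₁ hu₁ h
      · rw [List.mem_append] at h
        rcases h with h | h
        · exact he₁mem M hMu h
        · rw [List.mem_append] at h
          rcases h with h | h
          · exact he₁mem p₂ hu₂ (List.mem_reverse.mp h)
          · rw [List.mem_singleton] at h
            exact he₁₂ h
    · rw [List.nodup_append']
      refine ⟨hp₁ed, ?_, ?_⟩
      · rw [List.nodup_append']
        refine ⟨hMed, ?_, ?_⟩
        · rw [List.nodup_append']
          refine ⟨List.nodup_reverse.mpr hp₂ed, List.nodup_singleton e₂, ?_⟩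
          intro f hf hf'
          rw [List.mem_singleton] at hf'
          subst hf'
          exact he₂mem p₂ hu₂ (List.mem_reverse.mp hf)
        · intro f hf hf'
          rw [List.mem_append] at hf'
          rcases hf' with hf' | hf'
          · exact cross t₂ M p₂ (fun v hv hv' => hp₂T v hv' (hMT v hv)) f hf
              (List.mem_reverse.mp hf')
          · rw [List.mem_singleton] at hf'
            subst hf'
            exact he₂mem M hMu hf
      · intro f hf hf'
        rw [List.mem_append] at hf'
        rcases hf' with hf' | hf'
        · exact cross t₁ p₁ M (fun v hv hv' => hp₁T v hv (hMT v hv')) f hf hf'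
        · rw [List.mem_append] at hf'
          rcases hf' with hf' | hf'
          · refine cross t₁ p₁ p₂ ?_ f hf (List.mem_reverse.mp hf')
            intro v hv hv'
            exact absurd hv' (hdisj v hv)
          · rw [List.mem_singleton] at hf'
            subst hf'
            exact he₂mem p₁ hu₁ hf
  refine ⟨W.eset, isCycle_eset W (by rw [hWedges]; simp) hsup_nd hed_nd, ?_, ?_, ?_⟩
  · rw [mem_eset, hWedges]; simp
  · rw [mem_eset, hWedges]; simp
  · rw [signOf_eset W hed_nd, hWedges]
    simp only [List.map_cons, List.map_append, List.prod_cons, List.prod_append,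
      List.map_reverse, List.prod_reverse, List.prod_cons, List.prod_nil,
      List.map_nil, mul_one]

end SGraph

namespace SGraph

variable {G : SGraph}

section Aux3

variable {u v₁ v₂ : G.V} {Tset : Set G.V}
variable (hv₁ : v₁ ≠ u) (hv₂ : v₂ ≠ u) (hT : ∀ t ∈ Tset, t ≠ u)

local notation "H" => AuxG u v₁ v₂ Tset hv₁ hv₂ hT

open Walk in
lemma arc_process (Kb : Walk (H) (Sum.inr false) (Sum.inr true))
    (hnd : Kb.support.Nodup) :
    ∃ (bb : Bool) (eB : (H).E) (wv tv : G.V) (q : Walk G wv tv),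
      eB = Sum.inr (Sum.inr bb) ∧ eB ∈ Kb.edges ∧
      wv = (if bb then v₁ else v₂) ∧ tv ∈ Tset ∧
      q.support.Nodup ∧
      (∀ v ∈ q.support, ∃ hvu : v ≠ u, (Sum.inl ⟨v, hvu⟩ : (H).V) ∈ Kb.support) := by
  match Kb with
  | .cons eB hB Kb' =>
    rename_i z
    -- identify the first edge as a ▪-edge
    have hzKb : z ∈ (Walk.cons eB hB Kb').support :=
      List.mem_cons_of_mem _ (start_mem_support Kb')
    obtain ⟨bb, rfl, hz⟩ : ∃ bb : Bool, eB = Sum.inr (Sum.inr bb) ∧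
        z = Sum.inl (if bb then ⟨v₁, hv₁⟩ else ⟨v₂, hv₂⟩) := by
      match eB with
      | Sum.inl ⟨e, hue⟩ =>
        exfalso
        rw [show (H).ends (Sum.inl ⟨e, hue⟩) = s(Sum.inl ⟨(G.epair e).1, _⟩,
          Sum.inl ⟨(G.epair e).2, _⟩) from rfl] at hB
        rcases Sym2.eq_iff.mp hB with ⟨hp, -⟩ | ⟨-, hq⟩ <;> simp_all
      | Sum.inr (Sum.inl t) =>
        exfalso
        rw [aux_ends_star hv₁ hv₂ hT t.1 t.2] at hB
        rcases Sym2.eq_iff.mp hB with ⟨hp, -⟩ | ⟨-, hq⟩ <;> simp_all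
      | Sum.inr (Sum.inr bb) =>
        rw [aux_ends_dot hv₁ hv₂ hT bb] at hB
        rcases Sym2.eq_iff.mp hB with ⟨-, hq⟩ | ⟨-, hq⟩
        · exact ⟨bb, rfl, hq.symm⟩
        · exact absurd hq (by simp)
    -- Kb' : Walk z (inr true); strip the ⋆-edge at the end
    have hKb'nd : Kb'.support.Nodup := by
      simp only [Walk.support, List.nodup_cons] at hnd
      exact hnd.2
    have hdotKb' : (Sum.inr false : (H).V) ∉ Kb'.support := by
      simp only [Walk.support, List.nodup_cons] at hnd
      exact hnd.1
    rcases hrev : Kb'.reverse with _ | ⟨eS, hS, D⟩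
    · exfalso
      simp at hz
    · rename_i z₂
      -- identify eS as a ⋆-edge
      obtain ⟨tS, htS, hz₂⟩ : ∃ (tS : G.V) (htS : tS ∈ Tset),
          z₂ = Sum.inl ⟨tS, hT tS htS⟩ := by
        match eS with
        | Sum.inl ⟨e, hue⟩ =>
          exfalso
          rw [show (H).ends (Sum.inl ⟨e, hue⟩) = s(Sum.inl ⟨(G.epair e).1, _⟩,
            Sum.inl ⟨(G.epair e).2, _⟩) from rfl] at hS
          rcases Sym2.eq_iff.mp hS with ⟨hp, -⟩ | ⟨-, hq⟩ <;> simp_all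
        | Sum.inr (Sum.inl t) =>
          rw [aux_ends_star hv₁ hv₂ hT t.1 t.2] at hS
          rcases Sym2.eq_iff.mp hS with ⟨-, hq⟩ | ⟨-, hq⟩
          · exact ⟨t.1, t.2, hq.symm⟩
          · exact absurd hq (by simp)
        | Sum.inr (Sum.inr bb) =>
          exfalso
          rw [aux_ends_dot hv₁ hv₂ hT bb] at hS
          rcases Sym2.eq_iff.mp hS with ⟨hp, -⟩ | ⟨-, hq⟩ <;> simp_all
      -- D : Walk z₂ z ; use D.reverse : Walk z z₂
      have hDsup : D.support = Kb'.reverse.support.tail := by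
        rw [hrev]
        simp [Walk.support]
      have hDmem : ∀ v ∈ D.support, v ∈ Kb'.support := by
        intro v hv
        rw [hDsup] at hv
        have := List.mem_of_mem_tail hv
        rwa [support_reverse, List.mem_reverse] at this
      have hstarD : (Sum.inr true : (H).V) ∉ D.support := by
        intro hmem
        have hndrev : Kb'.reverse.support.Nodup := by
          rw [support_reverse]
          exact List.nodup_reverse.mpr hKb'nd
        rw [support_head Kb'.reverse] at hndrev
        rw [hDsup] at hmem
        exact (List.nodup_cons.mp hndrev).1 (by
          have : Kb'.reverse.support = (Sum.inr true : (H).V) :: Kb'.reverse.support.tail :=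
            support_head Kb'.reverse
          exact hmem)
      have hDnd : D.support.Nodup := by
        have hndrev : Kb'.reverse.support.Nodup := by
          rw [support_reverse]
          exact List.nodup_reverse.mpr hKb'nd
        rw [support_head Kb'.reverse] at hndrev
        rw [hDsup]
        exact (List.nodup_cons.mp hndrev).2
      have hDinl : ∀ v'' ∈ D.reverse.support, ∀ bb2 : Bool, v'' ≠ Sum.inr bb2 := by
        intro v'' hv'' bb2
        rw [support_reverse, List.mem_reverse] at hv''
        cases bb2
        · exact fun h => hdotKb' (h ▸ hDmem v'' hv'')
        · exact fun h => hstarD (h ▸ hv'')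
      obtain ⟨q, hq⟩ := fromAux hv₁ hv₂ hT D.reverse hDinl
      refine ⟨bb, Sum.inr (Sum.inr bb), projV z, projV z₂, q, rfl, by simp, ?_, ?_, ?_, ?_⟩
      · rw [hz]
        cases bb <;> simp [projV]
      · rw [hz₂]
        simpa [projV] using htS
      · rw [hq]
        refine List.Nodup.map_on ?_ (by rw [support_reverse]; exact List.nodup_reverse.mpr hDnd)
        intro x hx y hy hxy
        rw [support_reverse, List.mem_reverse] at hx hy
        have hxi := hDinl x (by rw [support_reverse, List.mem_reverse]; exact hx)
        have hyi := hDinl y (by rw [support_reverse, List.mem_reverse]; exact hy)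
        match x, y with
        | Sum.inl s, Sum.inl s' =>
          simp only [projV] at hxy
          exact congrArg Sum.inl (Subtype.ext hxy)
        | Sum.inl s, Sum.inr b2 => exact absurd rfl (hyi b2)
        | Sum.inr b2, _ => exact absurd rfl (hxi b2)
      · intro v hv
        rw [hq, List.mem_map] at hv
        obtain ⟨v'', hv'', hproj⟩ := hv
        have hv''D : v'' ∈ D.support := by
          rw [support_reverse, List.mem_reverse] at hv''
          exact hv''
        match v'' with
        | Sum.inl s =>
          simp only [projV] at hproj
          subst hproj
          refine ⟨s.2, ?_⟩
          have : (Sum.inl s : (H).V) ∈ Kb'.support := hDmem _ hv''D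
          exact List.mem_cons_of_mem _ this
        | Sum.inr b2 =>
          exact absurd rfl (hDinl (Sum.inr b2) (by
            rw [support_reverse, List.mem_reverse]; exact hv''D) b2)

end Aux3

end SGraph

namespace SGraph

variable {G : SGraph}

lemma sign_pair_mul (a p q b A B : ℤˣ) :
    (a * (p * (A * (q * b)))) * (a * (p * (B * (q * b)))) = A * B := by
  have hsq : ∀ u : ℤˣ, u * u = 1 := fun u => by
    rcases Int.units_eq_one_or u with rfl | rfl <;> rfl
  have h1 : (a * (p * (A * (q * b)))) * (a * (p * (B * (q * b)))) =
      (a * a) * ((p * p) * ((q * q) * ((b * b) * (A * B)))) := by ac_rfl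
  rw [h1, hsq, hsq, hsq, hsq]
  simp

lemma untied_of_pair {e₁ e₂ : G.E} {C₁ C₂ : Set G.E}
    (h₁c : G.IsCycle C₁) (h₂c : G.IsCycle C₂)
    (h11 : e₁ ∈ C₁) (h12 : e₂ ∈ C₁) (h21 : e₁ ∈ C₂) (h22 : e₂ ∈ C₂)
    (hprod : G.signOf C₁ * G.signOf C₂ = -1) : G.Untied e₁ e₂ := by
  rcases Int.units_eq_one_or (G.signOf C₁) with h | h
  · rw [h, one_mul] at hprod
    exact ⟨⟨C₁, h₁c, h11, h12, h⟩, ⟨C₂, h₂c, h21, h22, hprod⟩⟩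
  · rw [h] at hprod
    have h2 : G.signOf C₂ = 1 := by
      have := congrArg (fun z => (-1 : ℤˣ) * z) hprod
      simpa using this
    exact ⟨⟨C₂, h₂c, h21, h22, h2⟩, ⟨C₁, h₁c, h11, h12, h⟩⟩

end SGraph


/-- If `e₁ = uv₁` and `e₂ = uv₂` share the vertex `u` in a 3-connected signed graph
and `G - u` is unbalanced, then `e₁` and `e₂` are untied. -/
theorem stmt_17 (G : SGraph) (h3 : G.KConnected 3)
    (u v₁ v₂ : G.V) (hv : v₁ ≠ v₂) (e₁ e₂ : G.E)
    (h₁ : G.ends e₁ = s(u, v₁)) (h₂ : G.ends e₂ = s(u, v₂))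
    (hub : ∃ C, G.IsCycle C ∧ G.signOf C = -1 ∧ u ∉ G.verts C) :
    G.Untied e₁ e₂ := by
  classical
  open SGraph SGraph.Walk in
  obtain ⟨N, hcycN, hsgnN, huN⟩ := hub
  obtain ⟨n0, WN, hWNeset, hWNne, hWNtail, hWNed⟩ := hcycN.exists_closed_walk
  set Tset := G.verts N with hTsetdef
  have hTu : ∀ t ∈ Tset, t ≠ u := fun t ht h => huN (h ▸ ht)
  have hsupN : ∀ v, v ∈ WN.support ↔ v ∈ Tset := by
    intro v
    constructor
    · intro hvv
      obtain ⟨e, he, hve⟩ := Walk.exists_edge_of_mem_support WN hWNne hvv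
      exact ⟨e, by rw [← hWNeset]; exact he, hve⟩
    · rintro ⟨e, heN, hve⟩
      exact Walk.mem_support_of_mem_edges WN (by rw [← Walk.mem_eset, hWNeset]; exact heN) hve
  have hv₁u : v₁ ≠ u := (Walk.ends_ne h₁).symm
  have hv₂u : v₂ ≠ u := (Walk.ends_ne h₂).symm
  have hT2 : ∃ t₁ ∈ Tset, ∃ t₂ ∈ Tset, t₁ ≠ t₂ := by
    obtain ⟨e, he⟩ := hcycN.1
    obtain ⟨p, q, hpq⟩ := ends_rep e
    exact ⟨p, ⟨e, he, by rw [hpq]; simp⟩, q, ⟨e, he, by rw [hpq]; simp⟩, Walk.ends_ne hpq⟩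
  -- the auxiliary graph
  have hcard3 : 3 ≤ Fintype.card (AuxG u v₁ v₂ Tset hv₁u hv₂u hTu).V := by
    have h2lt : 2 < Fintype.card ({v : G.V // v ≠ u} ⊕ Bool) :=
      Fintype.two_lt_card_iff.mpr ⟨Sum.inl ⟨v₁, hv₁u⟩, Sum.inr true, Sum.inr false,
        by simp, by simp, by simp⟩
    exact h2lt
  have hconnH := aux_hconn hv₁u hv₂u hTu hv h3.2 hT2
  obtain ⟨c'', K, Kne, Ktail, Ked, hdotK, hstarK⟩ :=
    common_cycle hcard3 hconnH (Sum.inr false) (Sum.inr true)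
      (fun hcc => Bool.noConfusion (Sum.inr.inj hcc))
  -- rotate the cycle at ▪ and split at ⋆
  set K' := K.rotate hdotK with hK'def
  have K'tail : K'.support.tail.Nodup := (Walk.support_rotate K hdotK).nodup_iff.mpr Ktail
  have K'ed : K'.edges.Nodup := (Walk.rotate_edges K hdotK).perm.nodup_iff.mpr Ked
  have K'ne : K'.edges ≠ [] := by
    intro hc
    have := (Walk.rotate_edges K hdotK).perm
    rw [hc] at this
    exact Kne this.symm.eq_nil
  have hstarK' : (Sum.inr true : (AuxG u v₁ v₂ Tset hv₁u hv₂u hTu).V) ∈ K'.support :=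
    (Walk.mem_rotate K hdotK Kne).mpr hstarK
  obtain ⟨hBnd, hCnd, hBC⟩ := Walk.closed_split K' hstarK'
    (fun hcc => Bool.noConfusion (Sum.inr.inj hcc)) K'tail
  set B := K'.takeUntil (Sum.inr true) hstarK' with hBdef
  set C := K'.dropUntil (Sum.inr true) hstarK' with hCdef
  have hedK' : K'.edges = B.edges ++ C.edges := Walk.edges_take_drop K' hstarK'
  have hdisjBC : ∀ f ∈ B.edges, f ∈ C.edges → False := by
    have := K'ed
    rw [hedK', List.nodup_append'] at this
    exact fun f hf hf' => this.2.2 hf hf'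
  have hCrevnd : C.reverse.support.Nodup := by
    rw [Walk.support_reverse]; exact List.nodup_reverse.mpr hCnd
  obtain ⟨bb₁, eB₁, wv₁, tv₁, q₁, heB₁eq, heB₁mem, hwv₁, htv₁, hq₁nd, hq₁mem⟩ :=
    arc_process hv₁u hv₂u hTu B hBnd
  obtain ⟨bb₂, eB₂, wv₂, tv₂, q₂, heB₂eq, heB₂mem, hwv₂, htv₂, hq₂nd, hq₂mem⟩ :=
    arc_process hv₁u hv₂u hTu C.reverse hCrevnd
  have heB₂C : eB₂ ∈ C.edges := by
    rw [Walk.edges_reverse, List.mem_reverse] at heB₂mem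
    exact heB₂mem
  have hbbne : bb₁ ≠ bb₂ := by
    intro h
    apply hdisjBC eB₁ heB₁mem
    rw [heB₁eq, h, ← heB₂eq]
    exact heB₂C
  have hdisjq : ∀ v ∈ q₁.support, v ∉ q₂.support := by
    intro v hv1 hv2
    obtain ⟨hvu, hm1⟩ := hq₁mem v hv1
    obtain ⟨hvu2, hm2⟩ := hq₂mem v hv2
    rw [Walk.support_reverse, List.mem_reverse] at hm2
    have hm2' : (Sum.inl ⟨v, hvu⟩ : (AuxG u v₁ v₂ Tset hv₁u hv₂u hTu).V) ∈ C.support := hm2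
    rcases hBC _ hm1 hm2' with h | h <;> simp at h
  -- truncate at the first Tset hit
  obtain ⟨t₁, p₁, ht₁T, hfirst₁, hp₁pre, -⟩ :=
    Walk.exists_takeUntilP q₁ (· ∈ Tset) ⟨tv₁, Walk.end_mem_support q₁, htv₁⟩
  obtain ⟨t₂, p₂, ht₂T, hfirst₂, hp₂pre, -⟩ :=
    Walk.exists_takeUntilP q₂ (· ∈ Tset) ⟨tv₂, Walk.end_mem_support q₂, htv₂⟩
  have hp₁sub : ∀ v ∈ p₁.support, v ∈ q₁.support := fun v hvv => hp₁pre.sublist.subset hvv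
  have hp₂sub : ∀ v ∈ p₂.support, v ∈ q₂.support := fun v hvv => hp₂pre.sublist.subset hvv
  have hp₁nd : p₁.support.Nodup := hq₁nd.sublist hp₁pre.sublist
  have hp₂nd : p₂.support.Nodup := hq₂nd.sublist hp₂pre.sublist
  have hup₁ : u ∉ p₁.support := by
    intro hmem
    obtain ⟨huu, -⟩ := hq₁mem u (hp₁sub u hmem)
    exact huu rfl
  have hup₂ : u ∉ p₂.support := by
    intro hmem
    obtain ⟨huu, -⟩ := hq₂mem u (hp₂sub u hmem)
    exact huu rfl
  have ht₁₂ : t₁ ≠ t₂ := by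
    intro h
    apply hdisjq t₁ (hp₁sub _ (Walk.end_mem_support p₁))
    rw [h]
    exact hp₂sub _ (Walk.end_mem_support p₂)
  have hdisjp : ∀ v ∈ p₁.support, v ∉ p₂.support :=
    fun v hvv h2 => hdisjq v (hp₁sub v hvv) (hp₂sub v h2)
  -- split the negative cycle at t₁, t₂
  have ht₁W : t₁ ∈ WN.support := (hsupN t₁).mpr ht₁T
  set WN' := WN.rotate ht₁W with hWN'def
  have hWN'tail : WN'.support.tail.Nodup := (Walk.support_rotate WN ht₁W).nodup_iff.mpr hWNtail
  have hWN'ed : WN'.edges.Nodup := (Walk.rotate_edges WN ht₁W).perm.nodup_iff.mpr hWNed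
  have ht₂W' : t₂ ∈ WN'.support :=
    (Walk.mem_rotate WN ht₁W hWNne).mpr ((hsupN t₂).mpr ht₂T)
  obtain ⟨hBNnd, hCNnd, -⟩ := Walk.closed_split WN' ht₂W' (Ne.symm ht₁₂) hWN'tail
  set BN := WN'.takeUntil t₂ ht₂W' with hBNdef
  set CN := WN'.dropUntil t₂ ht₂W' with hCNdef
  have hBNT : ∀ v ∈ BN.support, v ∈ Tset := fun v hvv =>
    (hsupN v).mp ((Walk.mem_rotate WN ht₁W hWNne).mp
      (Walk.support_takeUntil_subset WN' ht₂W' hvv))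
  have hCNT : ∀ v ∈ CN.support, v ∈ Tset := fun v hvv =>
    (hsupN v).mp ((Walk.mem_rotate WN ht₁W hWNne).mp
      (Walk.support_dropUntil_subset WN' ht₂W' hvv))
  have hCNrevnd : CN.reverse.support.Nodup := by
    rw [Walk.support_reverse]; exact List.nodup_reverse.mpr hCNnd
  have hCNrevT : ∀ v ∈ CN.reverse.support, v ∈ Tset := by
    intro v hvv
    rw [Walk.support_reverse, List.mem_reverse] at hvv
    exact hCNT v hvv
  have hBNrevnd : BN.reverse.support.Nodup := by
    rw [Walk.support_reverse]; exact List.nodup_reverse.mpr hBNnd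
  have hBNrevT : ∀ v ∈ BN.reverse.support, v ∈ Tset := by
    intro v hvv
    rw [Walk.support_reverse, List.mem_reverse] at hvv
    exact hBNT v hvv
  have hprodarc : ((BN.edges.map G.sgn).prod) * ((CN.edges.map G.sgn).prod) = -1 := by
    have h1 : WN'.edges = BN.edges ++ CN.edges := Walk.edges_take_drop WN' ht₂W'
    have h2 : (WN'.edges.map G.sgn).prod = (WN.edges.map G.sgn).prod :=
      ((Walk.rotate_edges WN ht₁W).perm.map G.sgn).prod_eq
    have h3 : (WN.edges.map G.sgn).prod = -1 := by
      rw [← Walk.signOf_eset WN hWNed, hWNeset]; exact hsgnN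
    rw [h1, List.map_append, List.prod_append] at h2
    rw [h2, h3]
  have hCNrevprod : (CN.reverse.edges.map G.sgn).prod = (CN.edges.map G.sgn).prod := by
    rw [Walk.edges_reverse, List.map_reverse, List.prod_reverse]
  have hBNrevprod : (BN.reverse.edges.map G.sgn).prod = (BN.edges.map G.sgn).prod := by
    rw [Walk.edges_reverse, List.map_reverse, List.prod_reverse]
  -- fix the pairing of starts
  cases bb₁
  · -- bb₁ = false : wv₁ = v₂, wv₂ = v₁
    have hb₂t : bb₂ = true := by
      cases bb₂
      · exact absurd rfl hbbne
      · rfl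
    rw [if_neg (by simp)] at hwv₁
    rw [hb₂t, if_pos rfl] at hwv₂
    subst hwv₁
    subst hwv₂
    -- p₂ : v₁ ⇝ t₂ , p₁ : v₂ ⇝ t₁, arcs CN : t₂ ⇝ t₁ and BN.reverse : t₂ ⇝ t₁
    obtain ⟨C₁, hC₁cyc, he₁C₁, he₂C₁, hs₁⟩ :=
      final_glue h₁ h₂ hv p₂ p₁ CN hp₂nd hp₁nd hCNnd
        (fun v hvv h2 => hdisjp v h2 hvv) hfirst₂ hfirst₁ hCNT hup₂ hup₁ huN
    obtain ⟨C₂, hC₂cyc, he₁C₂, he₂C₂, hs₂⟩ :=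
      final_glue h₁ h₂ hv p₂ p₁ BN.reverse hp₂nd hp₁nd hBNrevnd
        (fun v hvv h2 => hdisjp v h2 hvv) hfirst₂ hfirst₁ hBNrevT hup₂ hup₁ huN
    rw [hBNrevprod] at hs₂
    refine untied_of_pair hC₁cyc hC₂cyc he₁C₁ he₂C₁ he₁C₂ he₂C₂ ?_
    rw [hs₁, hs₂, sign_pair_mul, mul_comm]
    exact hprodarc
  · -- bb₁ = true : wv₁ = v₁, wv₂ = v₂
    have hb₂f : bb₂ = false := by
      cases bb₂
      · rfl
      · exact absurd rfl hbbne
    rw [if_pos rfl] at hwv₁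
    rw [hb₂f, if_neg (by simp)] at hwv₂
    subst hwv₁
    subst hwv₂
    obtain ⟨C₁, hC₁cyc, he₁C₁, he₂C₁, hs₁⟩ :=
      final_glue h₁ h₂ hv p₁ p₂ BN hp₁nd hp₂nd hBNnd
        hdisjp hfirst₁ hfirst₂ hBNT hup₁ hup₂ huN
    obtain ⟨C₂, hC₂cyc, he₁C₂, he₂C₂, hs₂⟩ :=
      final_glue h₁ h₂ hv p₁ p₂ CN.reverse hp₁nd hp₂nd hCNrevnd
        hdisjp hfirst₁ hfirst₂ hCNrevT hup₁ hup₂ huN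
    rw [hCNrevprod] at hs₂
    refine untied_of_pair hC₁cyc hC₂cyc he₁C₁ he₂C₁ he₁C₂ he₂C₂ ?_
    rw [hs₁, hs₂, sign_pair_mul]
    exact hprodarc
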